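/- arXiv:math/0609634 — 5 statements merged into one kernel-verified Lean document; each statement's English description precedes it below -/
import Mathlib

section
/- Every combinatorial k-parameter (S, Λ) is ℵ_{k+1}-free: for every subset Λ' ⊆ Λ of cardinality less than ℵ_{k+1} there is an enumeration ⟨η̄^α : α < α*⟩ of Λ' without repetitions such that for every α < α* there exist m ≤ k and n ∈ ℕ with η̄^α↾⟨m,n⟩ ∉ {η̄^β↾⟨m,n⟩ : β < α}. -/
open Cardinal

universe u

namespace Sh883

/-- A "restricted tuple": the result of replacing the `m`-th coordinate of a `(k+1)`-tuple
of functions `ℕ → S` by a finite sequence (list) of elements of `S`, keeping the other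
coordinates. -/
structure Res (k : ℕ) (S : Type u) where
  m : Fin (k + 1)
  seq : List S
  rest : (l : Fin (k + 1)) → l ≠ m → ℕ → S

/-- `η̄↾⟨m,n⟩` : replace the `m`-th coordinate of `η̄` by the finite sequence
`⟨η_m(0), …, η_m(n-1)⟩`. -/
def restrictAt {k : ℕ} {S : Type u} (η : Fin (k + 1) → ℕ → S) (m : Fin (k + 1)) (n : ℕ) :
    Res k S :=
  ⟨m, List.ofFn fun i : Fin n => η m i, fun l _ => η l⟩

end Sh883

namespace Sh883
namespace Stmt7

open Ordinal

variable {k : ℕ} {S : Type u}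

lemma res_eq {η β : Fin (k + 1) → ℕ → S} {m : Fin (k + 1)} {n : ℕ}
    (h : restrictAt η m n = restrictAt β m n) :
    (∀ i : Fin n, η m i = β m i) ∧ ∀ l, l ≠ m → η l = β l := by
  unfold restrictAt at h
  injection h with h1 h2 h3
  refine ⟨fun i => congrFun (List.ofFn_inj.mp h2) i, fun l hl => ?_⟩
  exact congrFun (congrFun h3 l) hl

/-- The set of coordinate functions of members of `X`. -/
def coords (X : Set (Fin (k + 1) → ℕ → S)) : Set (ℕ → S) :=
  {f | ∃ η ∈ X, ∃ l, η l = f}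

/-- Closure (inside `T`) of `X` : all tuples of `T` whose coordinates all appear
as coordinates of members of `X`. -/
def clo (T X : Set (Fin (k + 1) → ℕ → S)) : Set (Fin (k + 1) → ℕ → S) :=
  {η | η ∈ T ∧ ∀ l, η l ∈ coords X}

lemma coords_mono {X Y : Set (Fin (k + 1) → ℕ → S)} (h : X ⊆ Y) :
    coords X ⊆ coords Y := by
  rintro f ⟨η, hη, l, hl⟩; exact ⟨η, h hη, l, hl⟩

lemma clo_mono {T X Y : Set (Fin (k + 1) → ℕ → S)} (h : coords X ⊆ coords Y) :
    clo T X ⊆ clo T Y := fun η hη => ⟨hη.1, fun l => h (hη.2 l)⟩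

lemma coords_clo {T X : Set (Fin (k + 1) → ℕ → S)} :
    coords (clo T X) ⊆ coords X := by
  rintro f ⟨η, hη, l, hl⟩; exact hl ▸ hη.2 l

lemma mk_coords_le (X : Set (Fin (k + 1) → ℕ → S)) :
    #(coords X) ≤ #X * (k + 1) := by
  classical
  have hF : ∀ f : coords X, ∃ p : X × Fin (k + 1), (p.1 : Fin (k + 1) → ℕ → S) p.2 = (f : ℕ → S) := by
    rintro ⟨f, η, hη, l, hl⟩; exact ⟨⟨⟨η, hη⟩, l⟩, hl⟩
  choose F hFp using hF
  have hinj : Function.Injective F := by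
    intro a b hab
    apply Subtype.ext
    rw [← hFp a, ← hFp b, hab]
  refine le_trans (mk_le_of_injective hinj) ?_
  simp [Cardinal.mk_prod]

lemma mk_clo_le {c : Cardinal.{u}} (hc : ℵ₀ ≤ c) (T X : Set (Fin (k + 1) → ℕ → S))
    (hX : #X ≤ c) : #(clo T X) ≤ c := by
  have hk1 : ((k : Cardinal.{u}) + 1) ≤ c := by
    refine le_trans (le_of_lt ?_) hc
    exact_mod_cast Cardinal.nat_lt_aleph0 (k + 1)
  have h1 : #(coords X) ≤ c := by
    refine le_trans (mk_coords_le X) ?_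
    calc #X * ((k : Cardinal) + 1) ≤ c * c := mul_le_mul' hX hk1
      _ = c := Cardinal.mul_eq_self hc
  have hinj : Function.Injective
      (fun (η : clo T X) (l : Fin (k + 1)) => (⟨(η : Fin (k + 1) → ℕ → S) l, η.2.2 l⟩ : coords X)) := by
    intro a b hab
    apply Subtype.ext; funext l
    exact congrArg Subtype.val (congrFun hab l)
  refine le_trans (mk_le_of_injective hinj) ?_
  have harr : #(Fin (k + 1) → (coords X : Set (ℕ → S))) = #(coords X) ^ ((k + 1 : ℕ) : Cardinal.{u}) := by
    rw [Cardinal.mk_arrow]; simp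
  rw [harr]
  calc #(coords X) ^ ((k + 1 : ℕ) : Cardinal.{u}) ≤ c ^ ((k + 1 : ℕ) : Cardinal.{u}) :=
        Cardinal.power_le_power_right h1
    _ = c := by rw [Cardinal.power_natCast]; exact Cardinal.power_nat_eq hc (by omega)

lemma bads_subsingleton {T M : Set (Fin (k + 1) → ℕ → S)} (hcl : clo T M ⊆ M)
    {η : Fin (k + 1) → ℕ → S} (hη : η ∈ T) (hηM : η ∉ M) :
    {m : Fin (k + 1) | ∃ β ∈ M, ∀ l, l ≠ m → β l = η l}.Subsingleton := by
  intro m hm m' hm'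
  by_contra hne
  obtain ⟨β, hβ, hβe⟩ := hm
  obtain ⟨β', hβ', hβe'⟩ := hm'
  refine hηM (hcl ⟨hη, fun l => ?_⟩)
  by_cases hl : l = m'
  · exact ⟨β, hβ, l, hβe l (by rw [hl]; exact fun h => hne h.symm)⟩
  · exact ⟨β', hβ', l, hβe' l hl⟩

lemma muladd_lt {a b₁ b₂ c₁ : Ordinal.{u}} (hc : c₁ < a) (hb : b₁ < b₂) (c₂ : Ordinal.{u}) :
    a * b₁ + c₁ < a * b₂ + c₂ := by
  have h1 : a * b₁ + c₁ < a * b₁ + a := (add_lt_add_iff_left _).mpr hc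
  have h2 : a * b₁ + a = a * (b₁ + 1) := by
    rw [Ordinal.add_one_eq_succ, Ordinal.mul_succ]
  have h3 : a * (b₁ + 1) ≤ a * b₂ := by
    refine mul_le_mul_right ?_ a
    rwa [Ordinal.add_one_eq_succ, Order.succ_le_iff]
  exact lt_of_lt_of_le (h2 ▸ h1) (le_trans h3 le_self_add)

lemma muladd_inj {a b₁ b₂ c₁ c₂ : Ordinal.{u}} (h1 : c₁ < a) (h2 : c₂ < a)
    (h : a * b₁ + c₁ = a * b₂ + c₂) : b₁ = b₂ ∧ c₁ = c₂ := by
  have hb : b₁ = b₂ := by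
    rcases lt_trichotomy b₁ b₂ with hlt | he | hgt
    · exact absurd h (ne_of_lt (muladd_lt h1 hlt c₂))
    · exact he
    · exact absurd h.symm (ne_of_lt (muladd_lt h2 hgt c₁))
  subst hb
  exact ⟨rfl, (add_right_inj _).mp h⟩

lemma key (j : ℕ) :
    ∀ (T : Set (Fin (k + 1) → ℕ → S)) (A : (Fin (k + 1) → ℕ → S) → Finset (Fin (k + 1))),
    Cardinal.mk T ≤ aleph (j : Ordinal.{u}) → (∀ η ∈ T, j + 1 ≤ (A η).card) →
    ∃ g : (Fin (k + 1) → ℕ → S) → Ordinal.{u},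
      (∀ η, g η < (aleph ((j : Ordinal.{u}) + 1)).ord) ∧ Set.InjOn g T ∧
      ∀ η ∈ T, ∃ m ∈ A η, ∃ n : ℕ, ∀ β ∈ T, g β < g η →
        restrictAt η m n ≠ restrictAt β m n := by
  induction j with
  | zero =>
    intro T A hT hA
    classical
    have hco : Countable T := Cardinal.mk_le_aleph0_iff.mp (by simpa using hT)
    obtain ⟨c, hc⟩ := exists_injective_nat T
    set g : (Fin (k + 1) → ℕ → S) → Ordinal.{u} :=
      fun η => if h : η ∈ T then ((c ⟨η, h⟩ : ℕ) : Ordinal.{u}) else 0 with hg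
    refine ⟨g, ?_, ?_, ?_⟩
    · intro η
      have hω : (omega0 : Ordinal.{u}) ≤ (aleph (((0 : ℕ) : Ordinal.{u}) + 1)).ord := by
        rw [← Cardinal.ord_aleph0]
        exact Cardinal.ord_le_ord.mpr (aleph0_le_aleph _)
      refine lt_of_lt_of_le ?_ hω
      by_cases h : η ∈ T
      · simp only [hg, dif_pos h]; exact nat_lt_omega0 _
      · simp only [hg, dif_neg h]; exact omega0_pos
    · intro x hx y hy hxy
      simp only [hg, dif_pos hx, dif_pos hy, Nat.cast_inj] at hxy
      exact congrArg Subtype.val (hc hxy : (⟨x, hx⟩ : T) = ⟨y, hy⟩)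
    · intro η hη
      have hcard := hA η hη
      obtain ⟨m, hm⟩ := Finset.card_pos.mp (show 0 < (A η).card by omega)
      have hPsub : {β | β ∈ T ∧ g β < g η} ⊆ Subtype.val '' {x : T | c x < c ⟨η, hη⟩} := by
        rintro β ⟨hβ, hlt⟩
        refine ⟨⟨β, hβ⟩, ?_, rfl⟩
        simpa [hg, dif_pos hβ, dif_pos hη] using hlt
      have hPfin : {β | β ∈ T ∧ g β < g η}.Finite := by
        refine Set.Finite.subset (Set.Finite.image _ ?_) hPsub
        exact Set.Finite.preimage hc.injOn (Set.finite_Iio _)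
      set dval : (Fin (k + 1) → ℕ → S) → ℕ := fun β =>
        if h : (∀ l, l ≠ m → β l = η l) ∧ β m ≠ η m then
          (Function.ne_iff.mp h.2).choose + 1 else 0 with hdval
      refine ⟨m, hm, hPfin.toFinset.sup dval, ?_⟩
      intro β hβ hlt heq
      obtain ⟨hseq, hrest⟩ := res_eq heq
      have hβP : β ∈ hPfin.toFinset := hPfin.mem_toFinset.mpr ⟨hβ, hlt⟩
      have hβη : β ≠ η := by
        rintro rfl; exact absurd hlt (lt_irrefl _)
      have hmne : β m ≠ η m := by
        intro hm'
        apply hβη; funext l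
        rcases eq_or_ne l m with rfl | hl
        · exact hm'
        · exact (hrest l hl).symm
      have hcond : (∀ l, l ≠ m → β l = η l) ∧ β m ≠ η m :=
        ⟨fun l hl => (hrest l hl).symm, hmne⟩
      have hd : dval β = (Function.ne_iff.mp hmne).choose + 1 := by
        rw [hdval]; exact dif_pos hcond
      have hp := (Function.ne_iff.mp hmne).choose_spec
      have hple := Finset.le_sup (f := dval) hβP
      have hplt : (Function.ne_iff.mp hmne).choose < hPfin.toFinset.sup dval := by omega
      exact hp (hseq ⟨_, hplt⟩).symm
  | succ j ih =>
    intro T A hT hA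
    classical
    set lam : Cardinal.{u} := aleph ((j : Ordinal.{u}) + 1) with hlam
    have hlaminf : ℵ₀ ≤ lam := aleph0_le_aleph _
    have hcast : (((j + 1 : ℕ)) : Ordinal.{u}) = (j : Ordinal.{u}) + 1 := by push_cast; rfl
    have haleph : aleph ((j : Ordinal.{u}) + 1) = Order.succ (aleph (j : Ordinal.{u})) := by
      rw [Ordinal.add_one_eq_succ, Cardinal.aleph_succ]
    have hTlam : #T ≤ lam := by rwa [hcast] at hT
    set mu : Cardinal.{u} := aleph (j : Ordinal.{u}) with hmu
    have hmuinf : ℵ₀ ≤ mu := aleph0_le_aleph _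
    -- an injective ordinal-valued indexing of T, bounded by lam.ord
    have hTle : #T ≤ #(lam.ord.ToType) := by
      rw [Cardinal.mk_toType, Cardinal.card_ord]; exact hTlam
    obtain ⟨f⟩ := (Cardinal.le_def _ _).mp hTle
    haveI : IsWellOrder lam.ord.ToType ((· < ·) : lam.ord.ToType → lam.ord.ToType → Prop) :=
      isWellOrder_lt
    set iot : (Fin (k + 1) → ℕ → S) → Ordinal.{u} :=
      fun η => if h : η ∈ T then (typein (α := lam.ord.ToType) (· < ·)).toRelEmbedding (f ⟨η, h⟩) else 0
      with hiot
    have hiotlt : ∀ η ∈ T, iot η < lam.ord := by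
      intro η h
      rw [hiot]; simp only [dif_pos h]
      have := typein_lt_type (α := lam.ord.ToType) (· < ·) (f ⟨η, h⟩)
      rwa [type_toType] at this
    have hiotinj : Set.InjOn iot T := by
      intro x hx y hy hxy
      simp only [hiot, dif_pos hx, dif_pos hy] at hxy
      have h1 := (typein (α := lam.ord.ToType) (· < ·)).toRelEmbedding.injective hxy
      exact congrArg Subtype.val (f.injective h1 : (⟨x, hx⟩ : T) = ⟨y, hy⟩)
    -- the filtration
    set M : Ordinal.{u} → Set (Fin (k + 1) → ℕ → S) :=
      fun i => clo T {η | η ∈ T ∧ iot η < i} with hM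
    have hMmono : ∀ {i i' : Ordinal.{u}}, i ≤ i' → M i ⊆ M i' := by
      intro i i' h
      exact clo_mono (coords_mono (fun η hη => ⟨hη.1, lt_of_lt_of_le hη.2 h⟩))
    have hMclosed : ∀ i, clo T (M i) ⊆ M i := fun i => clo_mono coords_clo
    have hself : ∀ η (h : η ∈ T), η ∈ M (iot η + 1) := by
      intro η h
      refine ⟨h, fun l => ⟨η, ⟨h, ?_⟩, l, rfl⟩⟩
      rw [Ordinal.add_one_eq_succ]; exact Order.lt_succ _
    set b : (Fin (k + 1) → ℕ → S) → Ordinal.{u} := fun η => sInf {i | η ∈ M (i + 1)} with hb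
    have hbmem : ∀ η ∈ T, η ∈ M (b η + 1) := fun η h => csInf_mem (s := {i | η ∈ M (i + 1)}) ⟨iot η, hself η h⟩
    have hble : ∀ η ∈ T, b η ≤ iot η := fun η h => csInf_le' (a := iot η) (s := {i | η ∈ M (i + 1)}) (hself η h)
    have hbnot : ∀ η ∈ T, η ∉ M (b η) := by
      intro η hη hin
      obtain ⟨-, h2⟩ := hin
      choose w hw wl hweq using h2
      rcases eq_zero_or_pos (b η) with hz | hpos
      · rw [hz] at hw
        exact absurd (hw 0).2 (not_lt_of_ge zero_le)
      · set s : Ordinal.{u} := Finset.univ.sup (fun l => iot (w l)) with hs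
        have hslt : s < b η := by
          rw [hs]
          refine Finset.sup_lt_iff (by exact hpos) |>.mpr ?_
          intro l _
          exact (hw l).2
        have hmem : η ∈ M (s + 1) := by
          refine ⟨hη, fun l => ⟨w l, ⟨(hw l).1, ?_⟩, wl l, hweq l⟩⟩
          have : iot (w l) ≤ s := by
            rw [hs]; exact Finset.le_sup (f := fun l => iot (w l)) (Finset.mem_univ l)
          rw [Ordinal.add_one_eq_succ]
          exact Order.lt_succ_of_le this
        have : b η ≤ s := csInf_le' hmem
        exact absurd hslt (not_lt.mpr this)
    -- blocks are small
    have hblock : ∀ i : Ordinal.{u}, #({η | η ∈ T ∧ b η = i} : Set _) ≤ mu := by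
      intro i
      by_cases hi : i + 1 < lam.ord
      · have hsub : {η | η ∈ T ∧ b η = i} ⊆ M (i + 1) := by
          rintro η ⟨hη, rfl⟩; exact hbmem η hη
        refine le_trans (Cardinal.mk_le_mk_of_subset hsub) ?_
        refine mk_clo_le hmuinf _ _ ?_
        have hinj2 : Function.Injective (fun (x : {η | η ∈ T ∧ iot η < i + 1}) =>
            Ordinal.ToType.mk (o := i + 1) ⟨iot x, x.2.2⟩) := by
          intro x y hxy
          apply Subtype.ext
          have h1 := (Ordinal.ToType.mk (o := i + 1)).injective hxy
          exact hiotinj x.2.1 y.2.1 (congrArg Subtype.val h1)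
        refine le_trans (mk_le_of_injective hinj2) ?_
        rw [Cardinal.mk_toType]
        have h3 : (i + 1).card < lam := Cardinal.lt_ord.mp hi
        rw [hlam, haleph, Order.lt_succ_iff] at h3
        exact h3
      · have hempty : {η | η ∈ T ∧ b η = i} = ∅ := by
          ext η
          simp only [Set.mem_setOf_eq, Set.mem_empty_iff_false, iff_false, not_and]
          intro hη hbη
          refine hi ?_
          rw [← hbη]
          have h1 : b η ≤ iot η := hble η hη
          have h2 : iot η < lam.ord := hiotlt η hη
          have hlim := Cardinal.isSuccLimit_ord hlaminf
          rw [Ordinal.add_one_eq_succ]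
          exact hlim.succ_lt (lt_of_le_of_lt h1 h2)
        rw [hempty]
        simp
    -- bad directions
    set bads : (Fin (k + 1) → ℕ → S) → Set (Fin (k + 1)) :=
      fun η => {m | ∃ β ∈ M (b η), ∀ l, l ≠ m → β l = η l} with hbads
    set fm : (Fin (k + 1) → ℕ → S) → Fin (k + 1) :=
      fun η => if h : ∃ m, m ∈ bads η then h.choose else ⟨0, Nat.succ_pos k⟩ with hfm
    set A' : (Fin (k + 1) → ℕ → S) → Finset (Fin (k + 1)) :=
      fun η => (A η).erase (fm η) with hA'
    have hA'card : ∀ η ∈ T, j + 1 ≤ (A' η).card := by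
      intro η hη
      have h1 := hA η hη
      have h2 := Finset.pred_card_le_card_erase (s := A η) (a := fm η)
      simp only [hA']
      omega
    have hA'notbad : ∀ η ∈ T, ∀ m ∈ A' η, m ∉ bads η := by
      intro η hη m hmA' hmbad
      have hsub := bads_subsingleton (hMclosed (b η)) hη (hbnot η hη)
      have hex : ∃ m', m' ∈ bads η := ⟨m, hmbad⟩
      have hfmbad : fm η ∈ bads η := by
        have heq : fm η = hex.choose := by simp only [hfm, dif_pos hex]
        rw [heq]; exact hex.choose_spec
      exact Finset.ne_of_mem_erase hmA' (hsub hmbad hfmbad)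
    -- recursive rankings within blocks
    have hIH : ∀ i : Ordinal.{u}, ∃ g : (Fin (k + 1) → ℕ → S) → Ordinal.{u},
        (∀ η, g η < (aleph ((j : Ordinal.{u}) + 1)).ord) ∧
        Set.InjOn g {η | η ∈ T ∧ b η = i} ∧
        ∀ η ∈ {η | η ∈ T ∧ b η = i}, ∃ m ∈ A' η, ∃ n : ℕ,
          ∀ β ∈ {η | η ∈ T ∧ b η = i}, g β < g η → restrictAt η m n ≠ restrictAt β m n :=
      fun i => ih _ A' (hblock i) (fun η hη => hA'card η hη.1)
    choose G hG1 hG2 hG3 using hIH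
    set g : (Fin (k + 1) → ℕ → S) → Ordinal.{u} :=
      fun η => if h : η ∈ T then lam.ord * b η + G (b η) η else 0 with hgdef
    have horder : ∀ x, x ∈ T → ∀ y, y ∈ T → g y < g x →
        b y < b x ∨ (b y = b x ∧ G (b x) y < G (b x) x) := by
      intro x hx y hy hlt
      simp only [hgdef, dif_pos hx, dif_pos hy] at hlt
      rcases lt_trichotomy (b y) (b x) with h | h | h
      · exact Or.inl h
      · right; refine ⟨h, ?_⟩
        rw [h] at hlt
        exact (add_lt_add_iff_left _).mp hlt
      · exact absurd (muladd_lt (hG1 (b x) x) h (G (b y) y)) (not_lt.mpr (le_of_lt hlt))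
    refine ⟨g, ?_, ?_, ?_⟩
    · intro η
      have hlamlt : lam < aleph (((j + 1 : ℕ) : Ordinal.{u}) + 1) := by
        rw [hlam, hcast]
        refine Cardinal.aleph_lt_aleph.mpr ?_
        rw [Ordinal.add_one_eq_succ]
        exact Order.lt_succ _
      by_cases hmem : η ∈ T
      · simp only [hgdef, dif_pos hmem]
        rw [Cardinal.lt_ord, Ordinal.card_add, Ordinal.card_mul, Cardinal.card_ord]
        have h1 : (b η).card < lam :=
          Cardinal.lt_ord.mp (lt_of_le_of_lt (hble η hmem) (hiotlt η hmem))
        have h2 : (G (b η) η).card < lam := Cardinal.lt_ord.mp (hG1 (b η) η)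
        calc lam * (b η).card + (G (b η) η).card ≤ lam * lam + lam :=
              add_le_add (mul_le_mul_right h1.le _) h2.le
          _ = lam + lam := by rw [Cardinal.mul_eq_self hlaminf]
          _ = lam := Cardinal.add_eq_self hlaminf
          _ < _ := hlamlt
      · simp only [hgdef, dif_neg hmem]
        rw [Cardinal.lt_ord]
        simpa using lt_of_lt_of_le Cardinal.aleph0_pos (aleph0_le_aleph _)
    · intro x hx y hy hxy
      simp only [hgdef, dif_pos hx, dif_pos hy] at hxy
      obtain ⟨hb', hc'⟩ := muladd_inj (hG1 (b x) x) (hG1 (b y) y) hxy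
      exact hG2 (b x) ⟨hx, rfl⟩ ⟨hy, hb'.symm⟩ (by rw [← hb'] at hc'; exact hc')
    · intro η hη
      obtain ⟨m, hmA', n, hn⟩ := hG3 (b η) η ⟨hη, rfl⟩
      refine ⟨m, Finset.mem_of_mem_erase hmA', n, ?_⟩
      intro β hβ hlt heq
      rcases horder η hη β hβ hlt with h | ⟨h1, h2⟩
      · have hβM : β ∈ M (b η) := by
          refine hMmono ?_ (hbmem β hβ)
          rwa [Ordinal.add_one_eq_succ, Order.succ_le_iff]
        obtain ⟨-, hrest⟩ := res_eq heq
        exact hA'notbad η hη m hmA' ⟨β, hβM, fun l hl => (hrest l hl).symm⟩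
      · exact hn β ⟨hβ, h1⟩ h2 heq

end Stmt7
end Sh883

open Sh883 in
/-- Every combinatorial `k`-parameter `(S, Λ)` is `ℵ_{k+1}`-free: for
every subset `Λ' ⊆ Λ` of cardinality less than `ℵ_{k+1}` there is an enumeration
`⟨η̄^α : α < α*⟩` of `Λ'` without repetitions such that for every `α < α*` there are
`m ≤ k` and `n ∈ ℕ` with `η̄^α↾⟨m,n⟩ ∉ {η̄^β↾⟨m,n⟩ : β < α}`. -/
theorem stmt7 {k : ℕ} {S : Type u} (Λ : Set (Fin (k + 1) → ℕ → S))
    (Λ' : Set (Fin (k + 1) → ℕ → S)) (hsub : Λ' ⊆ Λ)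
    (hcard : #Λ' < Cardinal.aleph (k + 1)) :
    ∃ (o : Ordinal.{u}) (e : Set.Iio o → (Fin (k + 1) → ℕ → S)),
      Function.Injective e ∧ Set.range e = Λ' ∧
      ∀ α : Set.Iio o, ∃ (m : Fin (k + 1)) (n : ℕ),
        ∀ β : Set.Iio o, (β : Ordinal) < (α : Ordinal) →
          restrictAt (e α) m n ≠ restrictAt (e β) m n := by
  classical
  have hk : #Λ' ≤ aleph (k : Ordinal.{u}) := by
    have hrw : Cardinal.aleph ((k : Ordinal.{u}) + 1) = Order.succ (aleph (k : Ordinal.{u})) := by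
      rw [Ordinal.add_one_eq_succ, Cardinal.aleph_succ]
    have : #Λ' < Cardinal.aleph ((k : Ordinal.{u}) + 1) := by exact_mod_cast hcard
    rw [hrw, Order.lt_succ_iff] at this
    exact this
  obtain ⟨g, hg1, hg2, hg3⟩ := Sh883.Stmt7.key k Λ' (fun _ => Finset.univ) hk
    (fun η _ => by simp)
  let r : ↥Λ' → ↥Λ' → Prop := fun x y => g x < g y
  haveI htri : IsTrichotomous ↥Λ' r := ⟨fun x y hxy hyx =>
    Subtype.ext (hg2 x.2 y.2 (le_antisymm (not_lt.mp hyx) (not_lt.mp hxy)))⟩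
  haveI htrans : IsTrans ↥Λ' r := ⟨fun _ _ _ h1 h2 => lt_trans h1 h2⟩
  haveI hwf : IsWellFounded ↥Λ' r := ⟨InvImage.wf (fun x : ↥Λ' => g x.1) Ordinal.lt_wf⟩
  haveI hwo : IsWellOrder ↥Λ' r := {}
  refine ⟨Ordinal.type r, fun α => ((Ordinal.enum r ⟨α.1, α.2⟩ : ↥Λ') : Fin (k + 1) → ℕ → S),
    ?_, ?_, ?_⟩
  · intro a b h
    have h1 : Ordinal.enum r ⟨a.1, a.2⟩ = Ordinal.enum r ⟨b.1, b.2⟩ := Subtype.ext h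
    have h2 := (Ordinal.enum r).injective h1
    exact Subtype.ext (congrArg Subtype.val h2)
  · ext x
    constructor
    · rintro ⟨α, rfl⟩
      exact (Ordinal.enum r ⟨α.1, α.2⟩).2
    · intro hx
      refine ⟨⟨((Ordinal.enum r).symm ⟨x, hx⟩).1, ((Ordinal.enum r).symm ⟨x, hx⟩).2⟩, ?_⟩
      have : Ordinal.enum r ((Ordinal.enum r).symm ⟨x, hx⟩) = ⟨x, hx⟩ :=
        (Ordinal.enum r).apply_symm_apply _
      simpa using congrArg Subtype.val this
  · intro α
    obtain ⟨m, -, n, hn⟩ := hg3 (Ordinal.enum r ⟨α.1, α.2⟩).1 (Ordinal.enum r ⟨α.1, α.2⟩).2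
    refine ⟨m, n, ?_⟩
    intro β hβα
    refine hn (Ordinal.enum r ⟨β.1, β.2⟩).1 (Ordinal.enum r ⟨β.1, β.2⟩).2 ?_
    have : r (Ordinal.enum r ⟨β.1, β.2⟩) (Ordinal.enum r ⟨α.1, α.2⟩) :=
      Ordinal.enum_lt_enum.mpr (by exact hβα)
    exact this
end

section
/- Let k be a natural number and χ an infinite cardinal with χ^{ℵ_0} = χ. For each ℓ ≤ k let S_ℓ be a set of cardinality ℶ_ℓ(χ) (where ℶ_0(χ) = χ and ℶ_{ℓ+1}(χ) = 2^{ℶ_ℓ(χ)}), and let Λ = ∏_{ℓ≤k}(ℕ → S_ℓ) be the set of all (k+1)-tuples ⟨η_0, …, η_k⟩ with η_ℓ : ℕ → S_ℓ. Then there exists a (Λ, χ̄)-black box with χ_m = χ for every m ≤ k. -/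
open Cardinal

namespace Sh883

/-- A "restricted tuple" in the many-sorted setting: the result of replacing the `m`-th
coordinate of a tuple `⟨η_0, …, η_k⟩` (with `η_l : ℕ → S l`) by a finite sequence of
elements of `S m`, keeping the other coordinates. -/
structure ResD (k : ℕ) (S : Fin (k + 1) → Type u) where
  m : Fin (k + 1)
  seq : List (S m)
  rest : (l : Fin (k + 1)) → l ≠ m → ℕ → S l

/-- `η̄↾⟨m,n⟩` : replace the `m`-th coordinate of `η̄` by the finite sequence
`⟨η_m(0), …, η_m(n-1)⟩`. -/
def restrictAtD {k : ℕ} {S : Fin (k + 1) → Type u} (η : (m : Fin (k + 1)) → ℕ → S m)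
    (m : Fin (k + 1)) (n : ℕ) : ResD k S :=
  ⟨m, List.ofFn fun i : Fin n => η m i, fun l _ => η l⟩

/-- `Λ_m = {η̄↾⟨m,n⟩ : η̄ ∈ Λ, n ∈ ℕ}`. -/
def LambdaResAtD {k : ℕ} {S : Fin (k + 1) → Type u}
    (Λ : Set ((m : Fin (k + 1)) → ℕ → S m)) (m : Fin (k + 1)) : Set (ResD k S) :=
  {ν | ∃ η ∈ Λ, ∃ n : ℕ, ν = restrictAtD η m n}

/-- A `(Λ, χ̄)`-black box: a family of ordinals `α_{η̄,m,n} < χ_m` (for `η̄ ∈ Λ`, `m ≤ k`,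
`n ∈ ℕ`) such that for every function `h` on `Λ_0 ∪ … ∪ Λ_k` with `h(ν)` an ordinal
`< χ_m` whenever `ν ∈ Λ_m`, there is `η̄ ∈ Λ` with `h(η̄↾⟨m,n⟩) = α_{η̄,m,n}` for all
`m ≤ k` and `n ∈ ℕ`. -/
def IsBlackBoxD {k : ℕ} {S : Fin (k + 1) → Type u}
    (Λ : Set ((m : Fin (k + 1)) → ℕ → S m)) (χ : Fin (k + 1) → Cardinal.{u})
    (A : ↥Λ → Fin (k + 1) → ℕ → Ordinal.{u}) : Prop :=
  (∀ (η : ↥Λ) (m : Fin (k + 1)) (n : ℕ), A η m n < (χ m).ord) ∧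
    ∀ h : ResD k S → Ordinal.{u},
      (∀ m : Fin (k + 1), ∀ ν ∈ LambdaResAtD Λ m, h ν < (χ m).ord) →
      ∃ η : ↥Λ, ∀ (m : Fin (k + 1)) (n : ℕ),
        h (restrictAtD (η : (m : Fin (k + 1)) → ℕ → S m) m n) = A η m n

/-- Iterated beth function: `iterBeth χ 0 = χ` and `iterBeth χ (l+1) = 2 ^ iterBeth χ l`. -/
def iterBeth (χ : Cardinal.{u}) : ℕ → Cardinal.{u}
  | 0 => χ
  | l + 1 => 2 ^ iterBeth χ l

end Sh883

namespace Sh883BB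
open Sh883

universe u

variable (χ : Cardinal.{u})

lemma iterBeth_zero : iterBeth χ 0 = χ := rfl
lemma iterBeth_succ (n : ℕ) : iterBeth χ (n + 1) = 2 ^ iterBeth χ n := rfl

lemma aleph0_le_iterBeth (hχinf : ℵ₀ ≤ χ) : ∀ n, ℵ₀ ≤ iterBeth χ n
  | 0 => hχinf
  | n + 1 => (aleph0_le_iterBeth hχinf n).trans (Cardinal.cantor _).le

lemma iterBeth_mono : Monotone (iterBeth χ) :=
  monotone_nat_of_le_succ fun _ => (Cardinal.cantor _).le

lemma iterBeth_pow_aleph0 (hχinf : ℵ₀ ≤ χ) (hχ : χ ^ ℵ₀ = χ) :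
    ∀ n, iterBeth χ n ^ ℵ₀ = iterBeth χ n
  | 0 => hχ
  | n + 1 => by
    rw [iterBeth_succ, ← Cardinal.power_mul,
      Cardinal.mul_eq_left (aleph0_le_iterBeth χ hχinf n) (aleph0_le_iterBeth χ hχinf n)
        Cardinal.aleph0_ne_zero]

/-- The canonical type of size `iterBeth χ m`. -/
noncomputable def OT (m : ℕ) : Type u := ((iterBeth χ m).ord).ToType

lemma mk_OT (m : ℕ) : #(OT χ m) = iterBeth χ m := by
  rw [OT, Cardinal.mk_toType, Cardinal.card_ord]

lemma nonempty_OT (hχinf : ℵ₀ ≤ χ) (m : ℕ) : Nonempty (OT χ m) := by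
  rw [← Cardinal.mk_ne_zero_iff, mk_OT]
  exact ne_of_gt (lt_of_lt_of_le aleph0_pos (aleph0_le_iterBeth χ hχinf m))

noncomputable def toOrd (x : OT χ 0) : Ordinal.{u} :=
  ((Ordinal.ToType.mk).symm x).1

lemma toOrd_lt (x : OT χ 0) : toOrd χ x < χ.ord :=
  ((Ordinal.ToType.mk).symm x).2

noncomputable def ofOrd (z : OT χ 0) (o : Ordinal.{u}) : OT χ 0 :=
  if ho : o < χ.ord then Ordinal.ToType.mk ⟨o, ho⟩ else z

lemma toOrd_ofOrd (z : OT χ 0) {o : Ordinal.{u}} (ho : o < χ.ord) :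
    toOrd χ (ofOrd χ z o) = o := by
  have hd : ofOrd χ z o = Ordinal.ToType.mk (o := (iterBeth χ 0).ord) ⟨o, ho⟩ := dif_pos ho
  rw [toOrd, hd]
  exact congrArg Subtype.val
    ((Ordinal.ToType.mk (o := (iterBeth χ 0).ord)).symm_apply_apply ⟨o, ho⟩)

variable {k : ℕ} (S : Fin (k + 1) → Type u)

/-- Tuples. -/
abbrev Tup : Type u := (l : Fin (k + 1)) → ℕ → S l

/-- `f` depends only on coordinates `< m`. -/
def DOn (m : ℕ) (f : Tup S → OT χ 0) : Prop :=
  ∀ η η' : Tup S, (∀ l : Fin (k + 1), l.1 < m → η l = η' l) → f η = f η'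

/-- Functions depending only on coordinates `< m`. -/
def SubT (m : ℕ) : Type u := {f : Tup S → OT χ 0 // DOn χ S m f}

/-- The restricted tuple with `m`-coordinate `L`, lower coordinates from `ρ` and upper
coordinates from `u`. -/
def resAt (m : Fin (k + 1)) (L : List (S m)) (u ρ : Tup S) : ResD k S :=
  ⟨m, L, fun l _ => if l.1 < m.1 then ρ l else u l⟩

lemma resAt_mem (θ : Tup S) (m : Fin (k + 1)) (L : List (S m)) (u ρ : Tup S) :
    resAt S m L u ρ ∈ LambdaResAtD (Set.univ : Set (Tup S)) m := by
  classical
  set η' : Tup S := Function.update (fun l => if l.1 < m.1 then ρ l else u l) m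
      (fun i => if hi : i < L.length then L.get ⟨i, hi⟩ else θ m i) with hη'
  refine ⟨η', Set.mem_univ _, L.length, ?_⟩
  have hm : η' m = fun i => if hi : i < L.length then L.get ⟨i, hi⟩ else θ m i :=
    Function.update_self _ _ _
  have h1 : (List.ofFn fun i : Fin L.length => η' m i) = L := by
    have h2 : (fun i : Fin L.length => η' m i) = L.get := by
      funext i
      rw [hm]
      simp [i.isLt]
    rw [h2, List.ofFn_get]
  have h3 : (fun (l : Fin (k + 1)) (_ : l ≠ m) => η' l) =
      fun (l : Fin (k + 1)) (_ : l ≠ m) => if l.1 < m.1 then ρ l else u l := by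
    funext l hl
    rw [hη', Function.update_of_ne hl]
  rw [restrictAtD, h1, h3, resAt]

lemma exists_J (hχinf : ℵ₀ ≤ χ) (hχ : χ ^ ℵ₀ = χ)
    (hS : ∀ l : Fin (k + 1), #(S l) = iterBeth χ l.1) (θ : Tup S) (m : Fin (k + 1)) :
    Nonempty (SubT χ S m.1 ↪ OT χ m.1) := by
  classical
  obtain ⟨mv, hmk⟩ := m
  rcases mv with _ | m'
  · -- m = 0 : a function depending on no coordinates is determined by its value at θ
    refine ⟨⟨fun f => f.1 θ, ?_⟩⟩
    rintro ⟨f, hf⟩ ⟨g, hg⟩ hfg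
    simp only at hfg
    refine Subtype.ext (funext fun η => ?_)
    calc f η = f θ := hf η θ (fun l hl => absurd hl (Nat.not_lt_zero _))
    _ = g θ := hfg
    _ = g η := (hg η θ (fun l hl => absurd hl (Nat.not_lt_zero _))).symm
  · -- m = m' + 1
    rw [← Cardinal.le_def, mk_OT]
    -- embeddings of the lower sorts into `OT χ m'`
    have hemb : ∀ l : Fin (k + 1), l.1 < m' + 1 → Nonempty (S l ↪ OT χ m') := by
      intro l hl
      rw [← Cardinal.le_def, hS l, mk_OT]
      exact iterBeth_mono χ (Nat.lt_succ_iff.mp hl)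
    have emb : ∀ l : Fin (k + 1), l.1 < m' + 1 → (S l ↪ OT χ m') :=
      fun l hl => Classical.choice (hemb l hl)
    -- encoding of the `< m'+1` part of a tuple
    set enc : Tup S → (ℕ → Option (OT χ m')) := fun η c =>
      if hc : (⟨c % (k + 1), Nat.mod_lt _ (Nat.succ_pos k)⟩ : Fin (k + 1)).1 < m' + 1 then
        some (emb _ hc (η _ (c / (k + 1)))) else none with henc
    have enc_agree : ∀ η η' : Tup S, enc η = enc η' →
        ∀ l : Fin (k + 1), l.1 < m' + 1 → η l = η' l := by
      intro η η' hee l hl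
      funext n
      have := congrFun hee (l.1 + n * (k + 1))
      have hmod : (l.1 + n * (k + 1)) % (k + 1) = l.1 := by
        rw [Nat.add_mul_mod_self_right, Nat.mod_eq_of_lt l.2]
      have hdiv : (l.1 + n * (k + 1)) / (k + 1) = n := by
        rw [Nat.add_mul_div_right _ _ (Nat.succ_pos k), Nat.div_eq_of_lt l.2, Nat.zero_add]
      have hfl : (⟨(l.1 + n * (k + 1)) % (k + 1), Nat.mod_lt _ (Nat.succ_pos k)⟩ :
          Fin (k + 1)) = l := Fin.ext hmod
      rw [henc] at this
      dsimp only at this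
      have hP : (l.1 + n * (k + 1)) % (k + 1) < m' + 1 := by rw [hmod]; exact hl
      rw [dif_pos hP, dif_pos hP, hdiv] at this
      rw [← hfl]
      exact (emb _ hP).injective (Option.some_injective _ this)
    -- the main embedding into a function space
    have Φinj : Function.Injective
        (fun f : SubT χ S (m' + 1) => (fun r : ℕ → Option (OT χ m') =>
          if hr : ∃ η : Tup S, enc η = r then f.1 hr.choose else f.1 θ)) := by
      intro f g hfg
      refine Subtype.ext (funext fun η => ?_)
      have h1 := congrFun hfg (enc η)
      have hex : ∃ η' : Tup S, enc η' = enc η := ⟨η, rfl⟩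
      dsimp only at h1
      rw [dif_pos hex, dif_pos hex] at h1
      have hch : ∀ l : Fin (k + 1), l.1 < m' + 1 → hex.choose l = η l :=
        enc_agree _ _ hex.choose_spec
      calc f.1 η = f.1 hex.choose := f.2 η hex.choose (fun l hl => (hch l hl).symm)
      _ = g.1 hex.choose := h1
      _ = g.1 η := g.2 hex.choose η hch
    have hle1 : #(SubT χ S (m' + 1)) ≤ #((ℕ → Option (OT χ m')) → OT χ 0) :=
      Cardinal.mk_le_of_injective Φinj
    refine hle1.trans ?_
    -- cardinal arithmetic
    have hR : #(ℕ → Option (OT χ m')) = iterBeth χ m' := by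
      rw [Cardinal.mk_arrow]
      simp only [Cardinal.mk_option, mk_OT, Cardinal.mk_nat, Cardinal.lift_aleph0,
        Cardinal.lift_id, Cardinal.lift_id', Cardinal.add_one_eq (aleph0_le_iterBeth χ hχinf m')]
      exact iterBeth_pow_aleph0 χ hχinf hχ m'
    rw [← Cardinal.power_def, hR, mk_OT, iterBeth_zero]
    calc χ ^ iterBeth χ m' ≤ (2 ^ χ) ^ iterBeth χ m' :=
          Cardinal.power_le_power_right (Cardinal.cantor χ).le
    _ = 2 ^ (χ * iterBeth χ m') := (Cardinal.power_mul).symm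
    _ = 2 ^ iterBeth χ m' := by
        have hχle : χ ≤ iterBeth χ m' := iterBeth_mono χ (Nat.zero_le m')
        rw [Cardinal.mul_eq_right (aleph0_le_iterBeth χ hχinf m') hχle
          (aleph0_pos.trans_le hχinf).ne']
    _ = iterBeth χ (m' + 1) := rfl

lemma exists_e (hS : ∀ l : Fin (k + 1), #(S l) = iterBeth χ l.1) (l : Fin (k + 1)) :
    Nonempty (S l ≃ OT χ l.1) :=
  Cardinal.eq.mp (by rw [hS l, mk_OT])

section Construction

variable (e : ∀ l : Fin (k + 1), S l ≃ OT χ l.1)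
variable (J : ∀ m : Fin (k + 1), SubT χ S m.1 ↪ OT χ m.1)
variable (z : OT χ 0)
variable (h : ResD k S → Ordinal.{u})
variable (θ : Tup S)

open Classical in
noncomputable def dec (m : Fin (k + 1)) (x : OT χ m.1) : Tup S → OT χ 0 :=
  if hx : ∃ f : SubT χ S m.1, J m f = x then hx.choose.1 else fun _ => z

lemma dec_J (m : Fin (k + 1)) (f : SubT χ S m.1) : dec χ S J z m (J m f) = f.1 := by
  have hx : ∃ g : SubT χ S m.1, J m g = J m f := ⟨f, rfl⟩
  rw [dec, dif_pos hx]
  exact congrArg Subtype.val ((J m).injective hx.choose_spec)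

/-- The function of the lower coordinates predicted by `h` at `m`-th coordinate prefix `L`
(with upper coordinates from `u`). -/
noncomputable def FF (m : Fin (k + 1)) (u : Tup S) (L : List (S m)) : Tup S → OT χ 0 :=
  fun ρ => ofOrd χ z (h (resAt S m L u ρ))

lemma FF_DOn (m : Fin (k + 1)) (u : Tup S) (L : List (S m)) :
    DOn χ S m.1 (FF χ S z h m u L) := by
  intro ρ ρ' hag
  have hrest : (fun (l : Fin (k + 1)) (_ : l ≠ m) => if l.1 < m.1 then ρ l else u l) =
      fun (l : Fin (k + 1)) (_ : l ≠ m) => if l.1 < m.1 then ρ' l else u l := by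
    funext l hl
    by_cases hlm : l.1 < m.1
    · rw [if_pos hlm, if_pos hlm, hag l hlm]
    · rw [if_neg hlm, if_neg hlm]
  have : resAt S m L u ρ = resAt S m L u ρ' := by
    rw [resAt, resAt, hrest]
  simp only [FF, this]

/-- The next element of the `m`-th coordinate: codes the function `FF` inside `S m`. -/
noncomputable def nxt (m : Fin (k + 1)) (u : Tup S) (L : List (S m)) : S m :=
  (e m).symm (J m ⟨FF χ S z h m u L, FF_DOn χ S z h m u L⟩)

noncomputable def pref (m : Fin (k + 1)) (u : Tup S) : ℕ → List (S m)
  | 0 => []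
  | n + 1 => pref m u n ++ [nxt χ S e J z h m u (pref m u n)]

noncomputable def wfn (m : Fin (k + 1)) (u : Tup S) (n : ℕ) : S m :=
  nxt χ S e J z h m u (pref χ S e J z h m u n)

lemma pref_eq_ofFn (m : Fin (k + 1)) (u : Tup S) :
    ∀ n, pref χ S e J z h m u n = List.ofFn (fun i : Fin n => wfn χ S e J z h m u i)
  | 0 => by simp [pref]
  | n + 1 => by
    rw [pref, List.ofFn_succ', List.concat_eq_append, Fin.val_last]
    have hc : (fun i : Fin n => wfn χ S e J z h m u (i.castSucc).1) =
        fun i : Fin n => wfn χ S e J z h m u i.1 := by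
      funext i; rfl
    rw [hc, ← pref_eq_ofFn m u n, wfn]

noncomputable def TT : ℕ → Tup S
  | 0 => θ
  | j + 1 => Function.update (TT j) ⟨k - j, Nat.lt_succ_of_le (Nat.sub_le k j)⟩
      (wfn χ S e J z h ⟨k - j, Nat.lt_succ_of_le (Nat.sub_le k j)⟩ (TT j))

lemma TT_stable : ∀ j' : ℕ, j' ≤ k + 1 → ∀ j, j ≤ j' → ∀ l : Fin (k + 1), k + 1 - j ≤ l.1 →
    TT χ S e J z h θ j' l = TT χ S e J z h θ j l
  | 0, _, j, hj, l, _ => by rw [Nat.le_zero.mp hj]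
  | j' + 1, hj', j, hj, l, hl => by
    rcases Nat.eq_or_lt_of_le hj with rfl | hlt
    · rfl
    · have hj'' : j ≤ j' := Nat.lt_succ_iff.mp hlt
      have hne : l ≠ ⟨k - j', Nat.lt_succ_of_le (Nat.sub_le k j')⟩ := by
        intro he
        have hlv : l.1 = k - j' := congrArg Fin.val he
        omega
      rw [TT, Function.update_of_ne hne]
      exact TT_stable j' (Nat.le_of_succ_le hj') j hj'' l hl

end Construction

end Sh883BB

open Sh883BB

open Sh883 in
/-- Let `χ` be an infinite cardinal with `χ^{ℵ₀} = χ`, and for `ℓ ≤ k`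
let `S_ℓ` be a set of cardinality `ℶ_ℓ(χ)`.  Then the full set
`Λ = ∏_{ℓ≤k} (ℕ → S_ℓ)` of `(k+1)`-tuples has a `(Λ, χ̄)`-black box with `χ_m = χ`
for every `m ≤ k`. -/
theorem stmt11 (k : ℕ) (χ : Cardinal.{u}) (hχinf : ℵ₀ ≤ χ) (hχ : χ ^ ℵ₀ = χ)
    (S : Fin (k + 1) → Type u) (hS : ∀ l : Fin (k + 1), #(S l) = iterBeth χ l.1) :
    ∃ A : ↥(Set.univ : Set ((m : Fin (k + 1)) → ℕ → S m)) → Fin (k + 1) → ℕ → Ordinal.{u},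
      IsBlackBoxD Set.univ (fun _ => χ) A := by
  classical
  have hne : ∀ l : Fin (k + 1), Nonempty (S l) := by
    intro l
    rw [← Cardinal.mk_ne_zero_iff, hS l]
    exact (aleph0_pos.trans_le (aleph0_le_iterBeth χ hχinf l.1)).ne'
  let θ : Tup S := fun l _ => Classical.choice (hne l)
  obtain ⟨z⟩ := nonempty_OT χ hχinf 0
  let e : ∀ l : Fin (k + 1), S l ≃ OT χ l.1 := fun l => Classical.choice (exists_e χ S hS l)
  let J : ∀ m : Fin (k + 1), SubT χ S m.1 ↪ OT χ m.1 :=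
    fun m => Classical.choice (exists_J χ S hχinf hχ hS θ m)
  refine ⟨fun η m n => toOrd χ (dec χ S J z m (e m (η.1 m n)) η.1), ?_, ?_⟩
  · intro η m n
    exact toOrd_lt χ _
  · intro h hb
    set η' := TT χ S e J z h θ (k + 1) with hη'
    refine ⟨⟨η', Set.mem_univ _⟩, ?_⟩
    intro m n
    set j := k - m.1 with hj
    have hmk : m.1 ≤ k := Nat.lt_succ_iff.mp m.2
    set u := TT χ S e J z h θ j with hu
    have hmj : (⟨k - j, Nat.lt_succ_of_le (Nat.sub_le k j)⟩ : Fin (k + 1)) = m := by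
      apply Fin.ext
      show k - j = m.1
      omega
    have h1 : η' m = wfn χ S e J z h m u := by
      have hs : η' m = TT χ S e J z h θ (j + 1) m := by
        rw [hη']
        exact TT_stable χ S e J z h θ (k + 1) le_rfl (j + 1) (by omega) m (by omega)
      rw [hs, TT, hmj, Function.update_self, hu]
    have h2 : ∀ l : Fin (k + 1), m.1 < l.1 → u l = η' l := by
      intro l hl
      rw [hu, hη']
      exact (TT_stable χ S e J z h θ (k + 1) le_rfl j (by omega) l (by omega)).symm
    have hA : dec χ S J z m (e m (η' m n)) = FF χ S z h m u (pref χ S e J z h m u n) := by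
      rw [h1, wfn, nxt, Equiv.apply_symm_apply]
      exact dec_J χ S J z m _
    have hseq : pref χ S e J z h m u n = List.ofFn (fun i : Fin n => η' m i) := by
      rw [pref_eq_ofFn]
      congr 1
      funext i
      rw [h1]
    have hrest : (fun (l : Fin (k + 1)) (_ : l ≠ m) => if l.1 < m.1 then η' l else u l) =
        fun (l : Fin (k + 1)) (_ : l ≠ m) => η' l := by
      funext l hl
      by_cases hlm : l.1 < m.1
      · rw [if_pos hlm]
      · rw [if_neg hlm]
        refine h2 l ?_
        have : l.1 ≠ m.1 := fun hc => hl (Fin.ext hc)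
        omega
    have hres : resAt S m (pref χ S e J z h m u n) u η' = restrictAtD η' m n := by
      rw [resAt, restrictAtD, hseq, hrest]
    have hbd : h (resAt S m (pref χ S e J z h m u n) u η') < χ.ord :=
      hb m _ (resAt_mem S θ m _ u η')
    show h (restrictAtD η' m n) = toOrd χ (dec χ S J z m (e m (η' m n)) η')
    rw [hA]
    show h (restrictAtD η' m n) = toOrd χ (ofOrd χ z (h (resAt S m (pref χ S e J z h m u n) u η')))
    rw [toOrd_ofOrd χ z hbd, hres]
end

section
/- Let k be a natural number and χ an infinite cardinal with χ^{ℵ_0} = χ. For each ℓ ≤ k let S_ℓ be the set of ordinals below ℶ_ℓ(χ) (where ℶ_0(χ) = χ and ℶ_{ℓ+1}(χ) = 2^{ℶ_ℓ(χ)}), and let Λ = ∏_{ℓ≤k}(ℕ → S_ℓ). Suppose ⟨B_ν : ν ∈ Λ_0 ∪ … ∪ Λ_k⟩ is a family of sets with |B_ν| = ℶ_m(χ) whenever ν ∈ Λ_m. Then there is a family ⟨h_{η̄} : η̄ ∈ Λ⟩ such that: (a) each h_{η̄} is a function with domain {η̄↾⟨m,n⟩ : m ≤ k, n ∈ ℕ};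 (b) h_{η̄}(η̄↾⟨m,n⟩) ∈ B_{η̄↾⟨m,n⟩} for all m ≤ k, n ∈ ℕ; and (c) for every function h defined on Λ_0 ∪ … ∪ Λ_k with h(ν) ∈ B_ν for every ν, and for all ordinals α_ℓ < ℶ_ℓ(χ) (ℓ ≤ k), there exists η̄ = ⟨η_0, …, η_k⟩ ∈ Λ with h_{η̄} ⊆ h and η_ℓ(0) = α_ℓ for every ℓ ≤ k. -/
open Cardinal

namespace Sh883Proof
open Sh883

universe u

abbrev S (k : ℕ) (χ : Cardinal.{u}) : Fin (k + 1) → Type u :=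
  fun l => ((iterBeth χ l.1).ord).ToType

lemma aleph0_le_iterBeth {χ : Cardinal.{u}} (hχinf : ℵ₀ ≤ χ) : ∀ n, ℵ₀ ≤ iterBeth χ n
  | 0 => hχinf
  | n + 1 => le_trans (aleph0_le_iterBeth hχinf n) (Cardinal.cantor _).le

lemma iterBeth_mono (χ : Cardinal.{u}) {a b : ℕ} (hab : a ≤ b) :
    iterBeth χ a ≤ iterBeth χ b := by
  induction b, hab using Nat.le_induction with
  | base => exact le_rfl
  | succ b hab ih => exact ih.trans (Cardinal.cantor _).le

lemma iterBeth_pow_aleph0 {χ : Cardinal.{u}} (hχinf : ℵ₀ ≤ χ) (hχ : χ ^ ℵ₀ = χ) :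
    ∀ n, iterBeth χ n ^ ℵ₀ = iterBeth χ n
  | 0 => hχ
  | n + 1 => by
    show (2 ^ iterBeth χ n) ^ ℵ₀ = 2 ^ iterBeth χ n
    rw [← Cardinal.power_mul,
      Cardinal.mul_eq_left (aleph0_le_iterBeth hχinf n)
        (aleph0_le_iterBeth hχinf n) Cardinal.aleph0_ne_zero]

lemma mk_S (k : ℕ) (χ : Cardinal.{u}) (l : Fin (k + 1)) :
    #(S k χ l) = iterBeth χ l.1 := by
  show #((iterBeth χ l.1).ord).ToType = _
  rw [Cardinal.mk_toType, Cardinal.card_ord]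

lemma nonempty_S (k : ℕ) {χ : Cardinal.{u}} (hχinf : ℵ₀ ≤ χ) (l : Fin (k + 1)) :
    Nonempty (S k χ l) := by
  rw [← Cardinal.mk_ne_zero_iff, mk_S]
  intro h0
  have := aleph0_le_iterBeth hχinf l.1
  rw [h0] at this
  exact absurd this (by simp [Cardinal.aleph0_ne_zero])

def D (k : ℕ) (χ : Cardinal.{u}) (m : Fin (k + 1)) : Type u :=
  (l : Fin (k + 1)) → l.1 < m.1 → ℕ → S k χ l

lemma nonempty_D (k : ℕ) {χ : Cardinal.{u}} (hχinf : ℵ₀ ≤ χ) (m : Fin (k + 1)) :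
    Nonempty (D k χ m) :=
  ⟨fun l _ _ => (nonempty_S k hχinf l).some⟩

lemma mk_arrow_nat (k : ℕ) {χ : Cardinal.{u}} (hχinf : ℵ₀ ≤ χ) (hχ : χ ^ ℵ₀ = χ)
    (l : Fin (k + 1)) : #(ℕ → S k χ l) = iterBeth χ l.1 := by
  have h : #(ℕ → S k χ l) = #(S k χ l) ^ (ℵ₀ : Cardinal.{u}) := by
    rw [Cardinal.mk_arrow]; simp
  rw [h, mk_S, iterBeth_pow_aleph0 hχinf hχ]

lemma mk_D (k : ℕ) {χ : Cardinal.{u}} (hχinf : ℵ₀ ≤ χ) (hχ : χ ^ ℵ₀ = χ)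
    (m : Fin (k + 1)) :
    #(D k χ m) ≤ (if m.1 = 0 then 1 else iterBeth χ (m.1 - 1)) := by
  rw [D, Cardinal.mk_pi]
  split
  · next h0 =>
    have h1 : ∀ l : Fin (k + 1), #(l.1 < m.1 → ℕ → S k χ l) = 1 := by
      intro l
      have : IsEmpty (l.1 < m.1) := by simp [h0]
      exact Cardinal.mk_eq_one _
    calc Cardinal.prod (fun l => #(l.1 < m.1 → ℕ → S k χ l))
        = Cardinal.prod (fun _ : Fin (k+1) => (1 : Cardinal.{u})) :=
          congrArg _ (funext h1)
      _ ≤ 1 := by simp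
  · next h0 =>
    have hκ : ℵ₀ ≤ iterBeth χ (m.1 - 1) := aleph0_le_iterBeth hχinf _
    have step : ∀ l : Fin (k + 1),
        #(l.1 < m.1 → ℕ → S k χ l) ≤ iterBeth χ (m.1 - 1) := by
      intro l
      by_cases hl : l.1 < m.1
      · have h2 : #(l.1 < m.1 → ℕ → S k χ l) = #(ℕ → S k χ l) := by
          have : Unique (l.1 < m.1) := uniqueProp hl
          exact Cardinal.mk_congr (Equiv.funUnique _ _)
        rw [h2, mk_arrow_nat k hχinf hχ]
        exact iterBeth_mono χ (by omega)
      · have : IsEmpty (l.1 < m.1) := ⟨hl⟩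
        rw [Cardinal.mk_eq_one]
        exact le_trans (by norm_num) hκ
    calc Cardinal.prod (fun l => #(l.1 < m.1 → ℕ → S k χ l))
        ≤ Cardinal.prod (fun _ : Fin (k+1) => iterBeth χ (m.1 - 1)) :=
          Cardinal.prod_le_prod _ _ step
      _ = iterBeth χ (m.1 - 1) ^ (Cardinal.lift.{u} #(Fin (k+1))) := by
          rw [Cardinal.prod_const]; simp
      _ ≤ iterBeth χ (m.1 - 1) ^ (ℵ₀ : Cardinal.{u}) := by
          apply Cardinal.power_le_power_left (by
            intro hz; rw [hz] at hκ; exact absurd hκ (by simp [Cardinal.aleph0_ne_zero]))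
          simp only [Cardinal.mk_fin, Cardinal.lift_natCast]
          exact (Cardinal.nat_lt_aleph0 _).le
      _ = iterBeth χ (m.1 - 1) := iterBeth_pow_aleph0 hχinf hχ _

lemma mk_D_arrow (k : ℕ) {χ : Cardinal.{u}} (hχinf : ℵ₀ ≤ χ) (hχ : χ ^ ℵ₀ = χ)
    (m : Fin (k + 1)) : #(D k χ m → S k χ m) = #(S k χ m) := by
  rw [← Cardinal.power_def, mk_S]
  apply le_antisymm
  · rcases Nat.eq_zero_or_pos m.1 with h0 | h0
    · calc iterBeth χ m.1 ^ #(D k χ m) ≤ iterBeth χ m.1 ^ (1 : Cardinal.{u}) := by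
            apply Cardinal.power_le_power_left
            · intro hz
              have := aleph0_le_iterBeth hχinf m.1
              rw [hz] at this; exact absurd this (by simp [Cardinal.aleph0_ne_zero])
            · have := mk_D k hχinf hχ m
              rwa [if_pos h0] at this
        _ = iterBeth χ m.1 := Cardinal.power_one _
    · have hm : m.1 = (m.1 - 1) + 1 := by omega
      have hb : ℵ₀ ≤ iterBeth χ (m.1 - 1) := aleph0_le_iterBeth hχinf _
      calc iterBeth χ m.1 ^ #(D k χ m)
          ≤ iterBeth χ m.1 ^ iterBeth χ (m.1 - 1) := by
            apply Cardinal.power_le_power_left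
            · intro hz
              have := aleph0_le_iterBeth hχinf m.1
              rw [hz] at this; exact absurd this (by simp [Cardinal.aleph0_ne_zero])
            · have := mk_D k hχinf hχ m
              rwa [if_neg (by omega)] at this
        _ = iterBeth χ m.1 := by
            rw [hm]
            show (2 ^ iterBeth χ (m.1-1)) ^ iterBeth χ (m.1-1) = 2 ^ iterBeth χ (m.1-1)
            rw [← Cardinal.power_mul, Cardinal.mul_eq_self hb]
  · conv_lhs => rw [← Cardinal.power_one (iterBeth χ m.1)]
    apply Cardinal.power_le_power_left
    · intro hz
      have := aleph0_le_iterBeth hχinf m.1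
      rw [hz] at this; exact absurd this (by simp [Cardinal.aleph0_ne_zero])
    · rw [Cardinal.one_le_iff_ne_zero, Cardinal.mk_ne_zero_iff]
      exact nonempty_D k hχinf m


section Main

variable {k : ℕ} {χ : Cardinal.{u}}

/-- helper congruence for `ResD.mk` with fixed first coordinate. -/
lemma mk_congr_resD {m : Fin (k + 1)} {s1 s2 : List (S k χ m)}
    {r1 r2 : (l : Fin (k + 1)) → l ≠ m → ℕ → S k χ l} (hs : s1 = s2) (hr : r1 = r2) :
    (⟨m, s1, r1⟩ : ResD k (S k χ)) = ⟨m, s2, r2⟩ := by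
  subst hs; subst hr; rfl

lemma mem_res (hχinf : ℵ₀ ≤ χ) (ν : ResD k (S k χ)) :
    ν ∈ LambdaResAtD (Set.univ : Set ((m : Fin (k + 1)) → ℕ → S k χ m)) ν.m := by
  classical
  obtain ⟨m, seq, rest⟩ := ν
  have hd : ∀ l, S k χ l := fun l => (nonempty_S k hχinf l).some
  set g : ℕ → S k χ m := fun n => if hn : n < seq.length then seq.get ⟨n, hn⟩ else hd m
    with hg
  set f : (l : Fin (k + 1)) → ℕ → S k χ l :=
    Function.update (fun l => if h : l = m then (fun _ => hd l) else rest l h) m g with hf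
  refine ⟨f, Set.mem_univ _, seq.length, ?_⟩
  show (⟨m, seq, rest⟩ : ResD k (S k χ)) = ⟨m, List.ofFn fun i => f m i, fun l _ => f l⟩
  have hfm : f m = g := by rw [hf]; simp
  apply mk_congr_resD
  · rw [hfm]
    have h1 : ∀ i : Fin seq.length, g i.1 = seq.get i := by
      intro i; rw [hg]; simp [i.isLt]
    calc seq = List.ofFn seq.get := (List.ofFn_get seq).symm
      _ = List.ofFn fun i => g i.1 := by rw [funext h1]
  · funext l hl
    rw [hf, Function.update_of_ne hl]
    simp [hl]

variable (hχinf : ℵ₀ ≤ χ) (hχ : χ ^ ℵ₀ = χ)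
  (B : ResD k (S k χ) → Type u)
  (hB : ∀ (m : Fin (k + 1)) (ν : ResD k (S k χ)),
      ν ∈ LambdaResAtD Set.univ m → #(B ν) = iterBeth χ m.1)

noncomputable def dec (m : Fin (k + 1)) : S k χ m ≃ (D k χ m → S k χ m) :=
  Classical.choice (Cardinal.eq.mp (mk_D_arrow k hχinf hχ m).symm)

noncomputable def eB (ν : ResD k (S k χ)) : S k χ ν.m ≃ B ν :=
  Classical.choice (Cardinal.eq.mp ((mk_S k χ ν.m).trans (hB ν.m ν (mem_res hχinf ν)).symm))

noncomputable def Hdef (η : (m : Fin (k + 1)) → ℕ → S k χ m) (m : Fin (k + 1)) (n : ℕ) :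
    B (restrictAtD η m n) :=
  eB hχinf B hB (restrictAtD η m n)
    ((dec hχinf hχ m (η m (n + 1))) (fun l _ => η l))

def merge (m : Fin (k + 1)) (x : D k χ m)
    (y : (l : Fin (k + 1)) → m.1 < l.1 → ℕ → S k χ l) :
    (l : Fin (k + 1)) → l ≠ m → ℕ → S k χ l :=
  fun l hne =>
    if hlt : l.1 < m.1 then x l hlt
    else y l (by have : l.1 ≠ m.1 := fun hh => hne (Fin.ext hh); omega)

variable (h : (ν : ResD k (S k χ)) → B ν)
  (αs : Fin (k + 1) → Ordinal.{u}) (hαs : ∀ l : Fin (k + 1), αs l < (iterBeth χ l.1).ord)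

noncomputable def nxt (m : Fin (k + 1))
    (higher : (l : Fin (k + 1)) → m.1 < l.1 → ℕ → S k χ l) (s : List (S k χ m)) :
    S k χ m :=
  (dec hχinf hχ m).symm fun x =>
    (eB hχinf B hB ⟨m, s, merge m x higher⟩).symm (h ⟨m, s, merge m x higher⟩)

noncomputable def gpair (m : Fin (k + 1))
    (higher : (l : Fin (k + 1)) → m.1 < l.1 → ℕ → S k χ l) :
    ℕ → List (S k χ m) × S k χ m
  | 0 => ([], Ordinal.ToType.mk ⟨αs m, hαs m⟩)
  | n + 1 => ((gpair m higher n).1 ++ [(gpair m higher n).2],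
      nxt hχinf hχ B hB h m higher (gpair m higher n).1)

noncomputable def bld (m : Fin (k + 1))
    (higher : (l : Fin (k + 1)) → m.1 < l.1 → ℕ → S k χ l) (n : ℕ) : S k χ m :=
  (gpair hχinf hχ B hB h αs hαs m higher n).2

lemma gpair_fst (m : Fin (k + 1))
    (higher : (l : Fin (k + 1)) → m.1 < l.1 → ℕ → S k χ l) : ∀ n : ℕ,
    (gpair hχinf hχ B hB h αs hαs m higher n).1
      = List.ofFn fun i : Fin n => bld hχinf hχ B hB h αs hαs m higher i
  | 0 => by simp [gpair]
  | n + 1 => by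
    rw [List.ofFn_succ']
    show (gpair hχinf hχ B hB h αs hαs m higher n).1 ++ _ = _
    rw [gpair_fst m higher n, List.concat_eq_append]
    rfl

noncomputable def upperF : (j : ℕ) → (l : Fin (k + 1)) → k + 1 - j ≤ l.1 → ℕ → S k χ l
  | 0, l, hl => absurd hl (by have := l.isLt; omega)
  | j + 1, l, hl =>
    if h2 : k + 1 - j ≤ l.1 then upperF j l h2
    else bld hχinf hχ B hB h αs hαs l
      (fun l' hl' => upperF j l' (by have := l'.isLt; omega))

noncomputable def etaF (m : Fin (k + 1)) : ℕ → S k χ m :=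
  upperF hχinf hχ B hB h αs hαs (k + 1) m (by omega)

lemma upperF_stab : ∀ (i j : ℕ) (l : Fin (k + 1)) (p : k + 1 - j ≤ l.1)
    (p' : k + 1 - (j + i) ≤ l.1),
    upperF hχinf hχ B hB h αs hαs (j + i) l p' = upperF hχinf hχ B hB h αs hαs j l p
  | 0, j, l, p, p' => rfl
  | i + 1, j, l, p, p' => by
    show upperF hχinf hχ B hB h αs hαs ((j + i) + 1) l p' = _
    rw [upperF]
    rw [dif_pos (show k + 1 - (j + i) ≤ l.1 by omega)]
    exact upperF_stab i j l p _

lemma upperF_irrel (j j' : ℕ) (l : Fin (k + 1)) (p : k + 1 - j ≤ l.1)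
    (p' : k + 1 - j' ≤ l.1) (hjj : j ≤ j') :
    upperF hχinf hχ B hB h αs hαs j' l p' = upperF hχinf hχ B hB h αs hαs j l p := by
  obtain ⟨i, rfl⟩ := Nat.exists_eq_add_of_le hjj
  exact upperF_stab hχinf hχ B hB h αs hαs i j l p p'

lemma etaF_eq_bld (m : Fin (k + 1)) :
    etaF hχinf hχ B hB h αs hαs m
      = bld hχinf hχ B hB h αs hαs m (fun l _ => etaF hχinf hχ B hB h αs hαs l) := by
  have hm := m.isLt
  have h1 : etaF hχinf hχ B hB h αs hαs m
      = upperF hχinf hχ B hB h αs hαs ((k - m.1) + 1) m (by omega) :=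
    upperF_irrel hχinf hχ B hB h αs hαs _ _ m (by omega) (by omega) (by omega)
  rw [h1, upperF, dif_neg (show ¬ k + 1 - (k - m.1) ≤ m.1 by omega)]
  refine congrArg _ (funext fun l' => funext fun hl' => ?_)
  show upperF hχinf hχ B hB h αs hαs (k - m.1) l' _ = upperF hχinf hχ B hB h αs hαs (k + 1) l' (by omega)
  exact (upperF_irrel hχinf hχ B hB h αs hαs _ _ l' (by omega) (by omega) (by omega)).symm

lemma bld_succ (m : Fin (k + 1))
    (higher : (l : Fin (k + 1)) → m.1 < l.1 → ℕ → S k χ l) (n : ℕ) :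
    bld hχinf hχ B hB h αs hαs m higher (n + 1)
      = nxt hχinf hχ B hB h m higher
          (List.ofFn fun i : Fin n => bld hχinf hχ B hB h αs hαs m higher i) := by
  show nxt hχinf hχ B hB h m higher (gpair hχinf hχ B hB h αs hαs m higher n).1 = _
  exact congrArg _ (gpair_fst hχinf hχ B hB h αs hαs m higher n)

lemma etaF_zero (m : Fin (k + 1)) :
    etaF hχinf hχ B hB h αs hαs m 0 = Ordinal.ToType.mk ⟨αs m, hαs m⟩ := by
  rw [etaF_eq_bld]; rfl

lemma etaF_succ (m : Fin (k + 1)) (n : ℕ) :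
    etaF hχinf hχ B hB h αs hαs m (n + 1)
      = nxt hχinf hχ B hB h m (fun l _ => etaF hχinf hχ B hB h αs hαs l)
          (List.ofFn fun i : Fin n => etaF hχinf hχ B hB h αs hαs m i) := by
  calc etaF hχinf hχ B hB h αs hαs m (n + 1)
      = bld hχinf hχ B hB h αs hαs m (fun l _ => etaF hχinf hχ B hB h αs hαs l) (n + 1) := by
        rw [etaF_eq_bld hχinf hχ B hB h αs hαs m]
    _ = nxt hχinf hχ B hB h m (fun l _ => etaF hχinf hχ B hB h αs hαs l)
          (List.ofFn fun i : Fin n =>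
            bld hχinf hχ B hB h αs hαs m (fun l _ => etaF hχinf hχ B hB h αs hαs l) i) :=
        bld_succ hχinf hχ B hB h αs hαs m _ n
    _ = _ := by rw [← etaF_eq_bld hχinf hχ B hB h αs hαs m]

lemma eB_symm_congr {m : Fin (k + 1)} {s : List (S k χ m)}
    {r1 r2 : (l : Fin (k + 1)) → l ≠ m → ℕ → S k χ l} (hr : r1 = r2) :
    ((eB hχinf B hB ⟨m, s, r1⟩).symm (h ⟨m, s, r1⟩) : S k χ m)
      = (eB hχinf B hB ⟨m, s, r2⟩).symm (h ⟨m, s, r2⟩) := by cases hr; rfl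

lemma merge_eta (m : Fin (k + 1)) :
    merge m (fun l (_ : l.1 < m.1) => etaF hχinf hχ B hB h αs hαs l)
        (fun l (_ : m.1 < l.1) => etaF hχinf hχ B hB h αs hαs l)
      = fun l (_ : l ≠ m) => etaF hχinf hχ B hB h αs hαs l := by
  funext l hl
  unfold merge
  split <;> rfl

lemma dec_eta (m : Fin (k + 1)) (n : ℕ) :
    dec hχinf hχ m (etaF hχinf hχ B hB h αs hαs m (n + 1))
        (fun l _ => etaF hχinf hχ B hB h αs hαs l)
      = (eB hχinf B hB (restrictAtD (etaF hχinf hχ B hB h αs hαs) m n)).symm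
          (h (restrictAtD (etaF hχinf hχ B hB h αs hαs) m n)) := by
  rw [etaF_succ hχinf hχ B hB h αs hαs m n]
  unfold nxt
  rw [Equiv.apply_symm_apply]
  exact eB_symm_congr hχinf B hB h (merge_eta hχinf hχ B hB h αs hαs m)

lemma match_lemma (m : Fin (k + 1)) (n : ℕ) :
    h (restrictAtD (etaF hχinf hχ B hB h αs hαs) m n)
      = Hdef hχinf hχ B hB (etaF hχinf hχ B hB h αs hαs) m n := by
  unfold Hdef
  rw [dec_eta hχinf hχ B hB h αs hαs m n]
  exact (Equiv.apply_symm_apply _ _).symm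

end Main
end Sh883Proof

open Sh883 in
/-- Let `χ` be an infinite cardinal with `χ^{ℵ₀} = χ`, for `ℓ ≤ k` let
`S_ℓ` be the set of ordinals below `ℶ_ℓ(χ)` (realized as `((iterBeth χ ℓ).ord).ToType`),
and let `Λ` be the full set of tuples.  Given sets `B_ν` (`ν ∈ Λ_0 ∪ … ∪ Λ_k`) with
`|B_ν| = ℶ_m(χ)` for `ν ∈ Λ_m`, there is a family `⟨h_{η̄} : η̄ ∈ Λ⟩`, where `h_{η̄}` is
a function on the restrictions of `η̄` with `h_{η̄}(η̄↾⟨m,n⟩) ∈ B_{η̄↾⟨m,n⟩}`, such that: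
for every `h` with `h(ν) ∈ B_ν` for all `ν`, and all ordinals `α_ℓ < ℶ_ℓ(χ)`, there is
`η̄ ∈ Λ` with `h_{η̄} ⊆ h` and `η_ℓ(0) = α_ℓ` for every `ℓ ≤ k`. -/
theorem stmt12 (k : ℕ) (χ : Cardinal.{u}) (hχinf : ℵ₀ ≤ χ) (hχ : χ ^ ℵ₀ = χ)
    (B : ResD k (fun l : Fin (k + 1) => ((iterBeth χ l.1).ord).ToType) → Type u)
    (hB : ∀ (m : Fin (k + 1))
        (ν : ResD k (fun l : Fin (k + 1) => ((iterBeth χ l.1).ord).ToType)),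
        ν ∈ LambdaResAtD Set.univ m → #(B ν) = iterBeth χ m.1) :
    ∃ H : (η : (m : Fin (k + 1)) → ℕ → ((iterBeth χ m.1).ord).ToType) →
        (m : Fin (k + 1)) → (n : ℕ) → B (restrictAtD η m n),
      ∀ (h : (ν : ResD k (fun l : Fin (k + 1) => ((iterBeth χ l.1).ord).ToType)) → B ν)
        (αs : Fin (k + 1) → Ordinal.{u})
        (hαs : ∀ l : Fin (k + 1), αs l < (iterBeth χ l.1).ord),
        ∃ η : (m : Fin (k + 1)) → ℕ → ((iterBeth χ m.1).ord).ToType,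
          (∀ (m : Fin (k + 1)) (n : ℕ), h (restrictAtD η m n) = H η m n) ∧
          ∀ l : Fin (k + 1), η l 0 = Ordinal.ToType.mk ⟨αs l, hαs l⟩ := by
  refine ⟨Sh883Proof.Hdef hχinf hχ B hB, ?_⟩
  intro h αs hαs
  exact ⟨Sh883Proof.etaF hχinf hχ B hB h αs hαs,
    fun m n => Sh883Proof.match_lemma hχinf hχ B hB h αs hαs m n,
    fun l => Sh883Proof.etaF_zero hχinf hχ B hB h αs hαs l⟩
end

section
/- Let λ be an infinite cardinal and H a nonempty set of cardinality at most λ^{ℵ_0}. Then there exists a family ⟨h_{η,n} : η ∈ (ℕ → λ), n ∈ ℕ⟩ of elements of H such that: for every family ⟨f_ν : ν a finite sequence of ordinals less than λ⟩ of elements of H and every ordinal α < λ, there is a strictly increasing function η : ℕ → λ with η(0) = α and h_{η,n} = f_{η↾n} for every n ∈ ℕ (where η↾n = ⟨η(0), …, η(n−1)⟩). -/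
open Cardinal

/-- **the "silly black box".** Let `λ` be an infinite cardinal and `H` a
nonempty set of cardinality at most `λ^{ℵ₀}`.  There is a family
`⟨h_{η,n} : η ∈ (ℕ → λ), n ∈ ℕ⟩` of elements of `H` such that: for every family
`⟨f_ν : ν` a finite sequence of ordinals below `λ⟩` of elements of `H` and every ordinal
`α < λ`, there is a strictly increasing `η : ℕ → λ` with `η(0) = α` and
`h_{η,n} = f_{η↾n}` for every `n`.  (Ordinals below `λ` are realized as `λ.ord.toType`.) -/
theorem stmt13 (lam : Cardinal.{u}) (hlam : ℵ₀ ≤ lam)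
    (H : Type u) (hne : Nonempty H) (hH : #H ≤ lam ^ ℵ₀) :
    ∃ h : (ℕ → lam.ord.ToType) → ℕ → H,
      ∀ (f : List lam.ord.ToType → H) (α : lam.ord.ToType),
        ∃ η : ℕ → lam.ord.ToType, StrictMono η ∧ η 0 = α ∧
          ∀ n : ℕ, h η n = f (List.ofFn fun i : Fin n => η i) := by
  classical
  set T := lam.ord.ToType with hT
  have hmkT : #T = lam := mk_ord_toType lam
  -- an embedding of H into ℕ → T
  have hcard : #H ≤ #(ℕ → T) := by
    rw [Cardinal.mk_arrow]
    simpa [hmkT] using hH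
  obtain ⟨e⟩ : Nonempty (H ↪ (ℕ → T)) := Cardinal.le_def _ _ |>.mp hcard
  set g : (ℕ → T) → H := Function.invFun e with hg
  have hge : ∀ x : H, g (e x) = x := Function.leftInverse_invFun e.injective
  -- a pairing bijection and the decoding map `d`
  have hprod : #(T × T) = #T := by
    rw [Cardinal.mk_prod]
    simp only [Cardinal.lift_id, hmkT]
    exact Cardinal.mul_eq_self hlam
  obtain ⟨e2⟩ : Nonempty (T × T ≃ T) := Cardinal.eq.mp hprod
  set d : T → T := fun γ => (e2.symm γ).1 with hd
  -- every fiber of `d` is unbounded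
  have key : ∀ (β t : T), ∃ γ, β < γ ∧ d γ = t := by
    intro β t
    by_contra hcon
    push_neg at hcon
    -- embed T into Iic β
    have hmem : ∀ p : T, e2 (t, p) ∈ Set.Iic β := by
      intro p
      by_contra hb
      exact hcon _ (lt_of_not_ge hb) (by simp [hd])
    have hinj : Function.Injective (fun p : T => (⟨e2 (t, p), hmem p⟩ : Set.Iic β)) := by
      intro p q hpq
      have := congrArg Subtype.val hpq
      simpa using e2.injective this
    have h1 : lam ≤ #(Set.Iic β) := by
      have := Cardinal.mk_le_of_injective hinj
      rwa [hmkT] at this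
    have h2 : #(Set.Iic β) < lam := by
      have : (Set.Iic β : Set T) = Set.Iio β ∪ {β} := by
        ext x; simp [le_iff_lt_or_eq]
      rw [this]
      refine lt_of_le_of_lt (Cardinal.mk_union_le _ _) ?_
      refine Cardinal.add_lt_of_lt hlam (Cardinal.mk_Iio_ord_toType β) ?_
      simpa using lt_of_lt_of_le Cardinal.one_lt_aleph0 hlam
    exact absurd (lt_of_le_of_lt h1 h2) (lt_irrefl _)
  -- the black box
  refine ⟨fun η n => g (fun m => d (η (Nat.pair n m + 1))), ?_⟩
  intro f α
  -- build η by recursion; at step k+1 we encode the bit (Nat.unpair k).2 of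
  -- the code of f applied to the first (Nat.unpair k).1 values
  set pick : (ℕ → T) → ℕ → T := fun u k =>
    Classical.choose (key (u k)
      (e (f (List.ofFn fun i : Fin (Nat.unpair k).1 => u i)) (Nat.unpair k).2)) with hpick
  have hpick1 : ∀ u k, u k < pick u k :=
    fun u k => (Classical.choose_spec (key (u k) _)).1
  have hpick2 : ∀ u k, d (pick u k) =
      e (f (List.ofFn fun i : Fin (Nat.unpair k).1 => u i)) (Nat.unpair k).2 :=
    fun u k => (Classical.choose_spec (key (u k) _)).2
  set s : ℕ → ℕ → T := fun k => Nat.rec (fun _ => α)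
    (fun k u => fun i => if i = k + 1 then pick u k else u i) k with hs
  set η : ℕ → T := fun n => s n n with heta
  have hs0 : ∀ i, s 0 i = α := fun i => rfl
  have hsucc : ∀ k i, s (k + 1) i = if i = k + 1 then pick (s k) k else s k i :=
    fun k i => rfl
  have hcoh : ∀ k i, i ≤ k → s k i = η i := by
    intro k
    induction k with
    | zero =>
      intro i hi
      have : i = 0 := Nat.le_zero.mp hi
      rw [this]
    | succ k ih =>
      intro i hi
      rcases Nat.eq_or_lt_of_le hi with h | h
      · rw [h]
      · rw [hsucc, if_neg (by omega)]
        exact ih i (by omega)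
  have hmono : StrictMono η := by
    apply strictMono_nat_of_lt_succ
    intro k
    have : η (k + 1) = pick (s k) k := by
      show s (k + 1) (k + 1) = _
      rw [hsucc, if_pos rfl]
    rw [this]
    exact hpick1 (s k) k
  refine ⟨η, hmono, rfl, ?_⟩
  intro n
  have hval : ∀ m : ℕ, d (η (Nat.pair n m + 1)) =
      e (f (List.ofFn fun i : Fin n => η i)) m := by
    intro m
    set k := Nat.pair n m with hk
    have hη : η (k + 1) = pick (s k) k := by
      show s (k + 1) (k + 1) = _
      rw [hsucc, if_pos rfl]
    rw [hη, hpick2]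
    have hun : Nat.unpair k = (n, m) := Nat.unpair_pair n m
    have hnk : n ≤ k := Nat.left_le_pair n m
    have hofn : (List.ofFn fun i : Fin (Nat.unpair k).1 => s k i) =
        (List.ofFn fun i : Fin n => η i) := by
      simp only [hun]
      congr 1
      funext i
      exact hcoh k i (le_of_lt (lt_of_lt_of_le i.2 hnk))
    rw [hofn]
    simp [hun]
  calc g (fun m => d (η (Nat.pair n m + 1)))
      = g (e (f (List.ofFn fun i : Fin n => η i))) := by
        congr 1; funext m; exact hval m
    _ = f (List.ofFn fun i : Fin n => η i) := hge _
end

section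
/- Let x = (S, Λ) be a combinatorial k*-parameter, let k ≤ k* be a natural number, let Λ' ⊆ Λ have cardinality at most ℵ_k, and for each η̄ ∈ Λ' let u_{η̄} ⊆ {0, …, k*} be a set with more than k elements. Then there exist an enumeration ⟨η̄^α : α < α*⟩ of Λ' without repetitions and, for each α < α*, an index ℓ_α ∈ u_{η̄^α} and a natural number n_α such that η̄^α↾⟨ℓ_α, n_α⟩ ∉ {η̄^β↾⟨ℓ_α, n_α⟩ : β < α}. -/
open Cardinal

namespace Sh883

open Ordinal

universe u

variable {kst : ℕ} {S : Type u}

/-- ambient type of tuples -/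
abbrev F (kst : ℕ) (S : Type u) : Type u := Fin (kst + 1) → ℕ → S

theorem restrictAt_eq_iff {η β : F kst S} {m : Fin (kst + 1)} {n : ℕ} :
    restrictAt η m n = restrictAt β m n ↔
      (∀ i : Fin n, η m i = β m i) ∧ ∀ l, l ≠ m → η l = β l := by
  unfold restrictAt
  rw [Res.mk.injEq]
  simp only [heq_eq_eq, true_and]
  constructor
  · rintro ⟨h1, h2⟩
    refine ⟨fun i => congrFun (List.ofFn_inj.mp h1) i, fun l hl => ?_⟩
    exact congrFun (congrFun h2 l) hl
  · rintro ⟨h1, h2⟩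
    refine ⟨List.ofFn_inj.mpr (funext h1), ?_⟩
    funext l hl
    exact h2 l hl

/-- The "mixing" operation. -/
def mix (ℓ : Fin (kst + 1)) (a b : F kst S) : F kst S := Function.update a ℓ (b ℓ)

lemma mix_apply_ne (ℓ : Fin (kst + 1)) {l : Fin (kst + 1)} (h : l ≠ ℓ) (a b : F kst S) :
    mix ℓ a b l = a l := Function.update_of_ne h _ _

lemma mix_apply_self (ℓ : Fin (kst + 1)) (a b : F kst S) : mix ℓ a b ℓ = b ℓ :=
  Function.update_self _ _ _

/-- One step of closing under all mixes. -/
def stepSet (A : Set (F kst S)) : Set (F kst S) :=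
  A ∪ ⋃ ℓ : ULift.{u} (Fin (kst + 1)), Set.image2 (mix ℓ.down) A A

/-- Closure under all mixes. -/
def cl (A : Set (F kst S)) : Set (F kst S) := ⋃ n : ULift.{u} ℕ, stepSet^[n.down] A

lemma subset_stepSet (A : Set (F kst S)) : A ⊆ stepSet A := Set.subset_union_left

lemma stepSet_mono : Monotone (stepSet (kst := kst) (S := S)) := by
  intro A B h
  apply Set.union_subset_union h
  exact Set.iUnion_mono fun ℓ => Set.image2_subset h h

lemma iter_le_iter (A : Set (F kst S)) {n m : ℕ} (h : n ≤ m) :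
    stepSet^[n] A ⊆ stepSet^[m] A := by
  induction m with
  | zero => simp_all
  | succ m ih =>
    rcases Nat.lt_or_ge n (m + 1) with h' | h'
    · rw [Function.iterate_succ_apply']
      exact (ih (Nat.lt_succ_iff.mp h')).trans (subset_stepSet _)
    · have : n = m + 1 := le_antisymm h h'
      subst this; rfl

lemma subset_cl (A : Set (F kst S)) : A ⊆ cl A :=
  Set.subset_iUnion (fun n : ULift.{u} ℕ => stepSet^[n.down] A) ⟨0⟩

lemma cl_mono {A B : Set (F kst S)} (h : A ⊆ B) : cl A ⊆ cl B :=
  Set.iUnion_mono fun n => by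
    induction n.down with
    | zero => exact h
    | succ m ih => rw [Function.iterate_succ_apply', Function.iterate_succ_apply']
                   exact stepSet_mono ih

lemma mix_mem_cl {A : Set (F kst S)} {a b : F kst S} {ℓ : Fin (kst + 1)}
    (ha : a ∈ cl A) (hb : b ∈ cl A) : mix ℓ a b ∈ cl A := by
  obtain ⟨_, ⟨⟨n⟩, rfl⟩, ha⟩ := ha
  obtain ⟨_, ⟨⟨m⟩, rfl⟩, hb⟩ := hb
  have ha' : a ∈ stepSet^[max n m] A := iter_le_iter A (le_max_left n m) ha
  have hb' : b ∈ stepSet^[max n m] A := iter_le_iter A (le_max_right n m) hb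
  refine Set.mem_iUnion.mpr ⟨⟨max n m + 1⟩, ?_⟩
  rw [Function.iterate_succ_apply']
  exact Set.mem_union_right _ (Set.mem_iUnion.mpr ⟨⟨ℓ⟩, Set.mem_image2_of_mem ha' hb'⟩)

lemma mk_stepSet_le {A : Set (F kst S)} {c : Cardinal.{u}} (hc : ℵ₀ ≤ c) (hA : #A ≤ c) :
    #(stepSet A) ≤ c := by
  refine (Cardinal.mk_union_le _ _).trans ?_
  have h2 : #(⋃ ℓ : ULift.{u} (Fin (kst + 1)), Set.image2 (mix ℓ.down) A A) ≤ c := by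
    refine (Cardinal.mk_iUnion_le _).trans ?_
    have hsup : ⨆ ℓ : ULift.{u} (Fin (kst + 1)), #(Set.image2 (mix ℓ.down) A A) ≤ c :=
      ciSup_le' fun ℓ => Cardinal.mk_image2_le.trans
        ((mul_le_mul' hA hA).trans (Cardinal.mul_eq_self hc).le)
    have hι : #(ULift.{u} (Fin (kst + 1))) ≤ c := by
      refine le_trans ?_ hc
      simp [Cardinal.mk_fintype]
    exact (mul_le_mul' hι hsup).trans (Cardinal.mul_eq_self hc).le
  exact (add_le_add hA h2).trans (Cardinal.add_eq_self hc).le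

lemma mk_cl_le {A : Set (F kst S)} {c : Cardinal.{u}} (hc : ℵ₀ ≤ c) (hA : #A ≤ c) :
    #(cl A) ≤ c := by
  refine (Cardinal.mk_iUnion_le _).trans ?_
  have hsup : ⨆ n : ULift.{u} ℕ, #(stepSet^[n.down] A) ≤ c := by
    refine ciSup_le' fun n => ?_
    induction n.down with
    | zero => exact hA
    | succ m ih =>
      rw [Function.iterate_succ_apply']
      exact mk_stepSet_le hc ih
  have hι : #(ULift.{u} ℕ) ≤ c := by simpa using hc
  exact (mul_le_mul' hι hsup).trans (Cardinal.mul_eq_self hc).le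

/-- Transport `typein` along an equality of indices. -/
lemma typein_congr {ι : Type*} {α : Type v} (Bf : ι → Set α)
    (rB : ∀ t, ↥(Bf t) → ↥(Bf t) → Prop) (rBwo : ∀ t, IsWellOrder ↥(Bf t) (rB t))
    {t₁ t₂ : ι} (h : t₁ = t₂) (x : α) (m₁ : x ∈ Bf t₁) (m₂ : x ∈ Bf t₂) :
    @typein _ (rB t₁) (rBwo t₁) ⟨x, m₁⟩ = @typein _ (rB t₂) (rBwo t₂) ⟨x, m₂⟩ := by
  subst h; rfl

open Classical in
/-- a number past a disagreement point of two sequences -/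
noncomputable def diffBound (x y : F kst S) (ℓ : Fin (kst + 1)) : ℕ :=
  if h : x ℓ ≠ y ℓ then (Function.ne_iff.mp h).choose + 1 else 0

open Classical in
lemma diffBound_spec {x y : F kst S} {ℓ : Fin (kst + 1)} (h : x ℓ ≠ y ℓ) :
    ∃ m, m < diffBound x y ℓ ∧ x ℓ m ≠ y ℓ m := by
  rw [diffBound, dif_pos h]
  exact ⟨_, Nat.lt_succ_self _, (Function.ne_iff.mp h).choose_spec⟩

/-- Combining the block well-orders into a single well-order. -/
lemma combine (Λ' : Set (F kst S)) (u : F kst S → Set (Fin (kst + 1)))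
    {T : Type u} [LinearOrder T] (tO : T → Ordinal.{u}) (htO : StrictMono tO)
    (tf : ↥Λ' → T) (Bf : T → Set (F kst S)) (hB : ∀ η : ↥Λ', ↑η ∈ Bf (tf η))
    (rB : ∀ t, ↥(Bf t) → ↥(Bf t) → Prop) (rBwo : ∀ t, IsWellOrder ↥(Bf t) (rB t))
    (O : Ordinal.{u}) (hty : ∀ t, @Ordinal.type _ (rB t) (rBwo t) < O)
    (hprop : ∀ η : ↥Λ', ∃ ℓ ∈ u ↑η, ∃ n : ℕ,
      (∀ β' : ↥(Bf (tf η)), rB _ β' ⟨↑η, hB η⟩ →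
        restrictAt (↑η : F kst S) ℓ n ≠ restrictAt (↑β' : F kst S) ℓ n) ∧
      (∀ β : ↥Λ', tf β < tf η →
        restrictAt (↑η : F kst S) ℓ n ≠ restrictAt (↑β : F kst S) ℓ n)) :
    ∃ r : ↥Λ' → ↥Λ' → Prop, IsWellOrder ↥Λ' r ∧
      ∀ η : ↥Λ', ∃ ℓ ∈ u ↑η, ∃ n : ℕ, ∀ β : ↥Λ', r β η →
        restrictAt (↑η : F kst S) ℓ n ≠ restrictAt (↑β : F kst S) ℓ n := by
  haveI := rBwo
  let ordv : ↥Λ' → Ordinal.{u} := fun η =>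
    O * tO (tf η) + @typein _ (rB (tf η)) (rBwo (tf η)) ⟨↑η, hB η⟩
  have hlt : ∀ η : ↥Λ', @typein _ (rB (tf η)) (rBwo (tf η)) ⟨↑η, hB η⟩ < O :=
    fun η => lt_trans (typein_lt_type _ _) (hty _)
  have key : ∀ β η : ↥Λ', tf β < tf η → ordv β < ordv η := by
    intro β η h
    have h1 : ordv β < O * tO (tf β) + O := (add_lt_add_iff_left _).mpr (hlt β)
    have h2 : O * tO (tf β) + O = O * (tO (tf β) + 1) := (mul_add_one O _).symm
    have h3 : O * (tO (tf β) + 1) ≤ O * tO (tf η) := by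
      apply mul_le_mul_right
      rw [← Order.succ_eq_add_one, Order.succ_le_iff]
      exact htO h
    calc ordv β < O * tO (tf β) + O := h1
      _ = O * (tO (tf β) + 1) := h2
      _ ≤ O * tO (tf η) := h3
      _ ≤ ordv η := le_self_add
  have congrv : ∀ (β η : ↥Λ') (h : tf β = tf η),
      ordv β = O * tO (tf η) + @typein _ (rB (tf η)) (rBwo (tf η)) ⟨↑β, h ▸ hB β⟩ := by
    intro β η h
    show O * tO (tf β) + _ = _
    rw [show tO (tf β) = tO (tf η) from congrArg tO h,
      typein_congr Bf rB rBwo h (↑β) (hB β) (h ▸ hB β)]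
  have hinj : ∀ β η : ↥Λ', ordv β = ordv η → β = η := by
    intro β η h
    rcases lt_trichotomy (tf β) (tf η) with hlt' | heq | hgt
    · exact absurd h (key β η hlt').ne
    · rw [congrv β η heq] at h
      have h2 := typein_injective (rB (tf η)) ((add_right_inj _).mp h)
      exact Subtype.ext (Subtype.mk_eq_mk.mp h2)
    · exact absurd h.symm (key η β hgt).ne
  refine ⟨fun β η => ordv β < ordv η, ?_, ?_⟩
  · haveI : IsTrans ↥Λ' (fun β η => ordv β < ordv η) := ⟨fun _ _ _ => lt_trans⟩
    haveI : IsTrichotomous ↥Λ' (fun β η => ordv β < ordv η) := by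
      constructor
      intro a b h1 h2
      rcases lt_trichotomy (ordv a) (ordv b) with h | h | h
      · exact absurd h h1
      · exact hinj a b h
      · exact absurd h h2
    haveI : IsWellFounded ↥Λ' (fun β η => ordv β < ordv η) :=
      ⟨InvImage.wf ordv Ordinal.lt_wf⟩
    exact ⟨⟩
  · intro η
    obtain ⟨ℓ, hℓ, n, hblock, hcross⟩ := hprop η
    refine ⟨ℓ, hℓ, n, fun β hr => ?_⟩
    rcases lt_trichotomy (tf β) (tf η) with hlt' | heq | hgt
    · exact hcross β hlt'
    · have hr2 : ordv β < ordv η := hr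
      rw [congrv β η heq] at hr2
      have hr' : rB (tf η) ⟨↑β, heq ▸ hB β⟩ ⟨↑η, hB η⟩ :=
        (typein_lt_typein (rB (tf η))).mp (lt_of_add_lt_add_left hr2)
      exact hblock ⟨↑β, heq ▸ hB β⟩ hr'
    · exact absurd hr (lt_asymm (key η β hgt))

section Step

variable (Λ' : Set (F kst S)) {T : Type u} [LinearOrder T] (g : ↥Λ' ↪ T)

/-- the elements enumerated before `t` -/
def predS (t : T) : Set (F kst S) := {x | ∃ h : x ∈ Λ', g ⟨x, h⟩ < t}

lemma predS_mono {s t : T} (h : s ≤ t) : predS Λ' g s ⊆ predS Λ' g t :=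
  fun _ hx => ⟨hx.choose, lt_of_lt_of_le hx.choose_spec h⟩

/-- the closed approximations -/
def ClS (t : T) : Set (F kst S) := cl (predS Λ' g t)

lemma ClS_mono {s t : T} (h : s ≤ t) : ClS Λ' g s ⊆ ClS Λ' g t :=
  cl_mono (predS_mono Λ' g h)

variable (hwf : WellFounded ((· < ·) : T → T → Prop))
  (hne : ∀ η : ↥Λ', ∃ t, ↑η ∈ ClS Λ' g t)

/-- the first stage at which an element appears -/
noncomputable def tfn (η : ↥Λ') : T :=
  WellFounded.min hwf {t : T | (↑η : F kst S) ∈ ClS Λ' g t} (hne η)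

lemma tfn_mem (η : ↥Λ') : ↑η ∈ ClS Λ' g (tfn Λ' g hwf hne η) :=
  WellFounded.min_mem hwf {t : T | (↑η : F kst S) ∈ ClS Λ' g t} (hne η)

lemma tfn_least {η : ↥Λ'} {t : T} (h : t < tfn Λ' g hwf hne η) : ↑η ∉ ClS Λ' g t :=
  fun hmem =>
    WellFounded.not_lt_min hwf {t : T | (↑η : F kst S) ∈ ClS Λ' g t} hmem h

/-- `ℓ` is a bad coordinate for `x` at stage `t`. -/
def Bad (t : T) (x : F kst S) (ℓ : Fin (kst + 1)) : Prop :=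
  ∃ β, (∃ s, s < t ∧ β ∈ ClS Λ' g s) ∧ ∀ l, l ≠ ℓ → β l = x l

lemma bad_unique (η : ↥Λ') {ℓ₁ ℓ₂ : Fin (kst + 1)}
    (h₁ : Bad Λ' g (tfn Λ' g hwf hne η) ↑η ℓ₁) (h₂ : Bad Λ' g (tfn Λ' g hwf hne η) ↑η ℓ₂)
    (h12 : ℓ₁ ≠ ℓ₂) : False := by
  obtain ⟨β₁, ⟨s₁, hs₁, hc₁⟩, ha₁⟩ := h₁
  obtain ⟨β₂, ⟨s₂, hs₂, hc₂⟩, ha₂⟩ := h₂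
  have hc₁' : β₁ ∈ ClS Λ' g (max s₁ s₂) := ClS_mono Λ' g (le_max_left _ _) hc₁
  have hc₂' : β₂ ∈ ClS Λ' g (max s₁ s₂) := ClS_mono Λ' g (le_max_right _ _) hc₂
  have hη : (↑η : F kst S) = mix ℓ₁ β₁ β₂ := by
    funext l
    by_cases hl : l = ℓ₁
    · subst hl; rw [mix_apply_self]; exact (ha₂ l h12).symm
    · rw [mix_apply_ne _ hl]; exact (ha₁ l hl).symm
  exact tfn_least Λ' g hwf hne (max_lt hs₁ hs₂) (hη ▸ mix_mem_cl hc₁' hc₂')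

open Classical in
/-- the (unique, if any) bad coordinate -/
noncomputable def badL (t : T) (x : F kst S) : Fin (kst + 1) :=
  if h : ∃ ℓ, Bad Λ' g t x ℓ then h.choose else 0

lemma badL_eq (η : ↥Λ') {ℓ : Fin (kst + 1)} (h : Bad Λ' g (tfn Λ' g hwf hne η) ↑η ℓ) :
    ℓ = badL Λ' g (tfn Λ' g hwf hne η) ↑η := by
  have hex : ∃ ℓ, Bad Λ' g (tfn Λ' g hwf hne η) (↑η) ℓ := ⟨ℓ, h⟩
  rw [badL, dif_pos hex]
  by_contra hne'
  exact bad_unique Λ' g hwf hne η h hex.choose_spec hne'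

/-- the block of elements appearing first at stage `t` -/
def Blk (t : T) : Set (F kst S) := {x | ∃ h : x ∈ Λ', tfn Λ' g hwf hne ⟨x, h⟩ = t}

lemma blk_subset (t : T) : Blk Λ' g hwf hne t ⊆ ClS Λ' g t := by
  rintro x ⟨hx, ht⟩
  exact ht ▸ tfn_mem Λ' g hwf hne ⟨x, hx⟩

end Step

theorem aux (k : ℕ) : ∀ Λ' : Set (F kst S), #↥Λ' ≤ aleph k →
    ∀ u : F kst S → Set (Fin (kst + 1)), (∀ η ∈ Λ', k < (u η).ncard) →
    ∃ r : ↥Λ' → ↥Λ' → Prop, IsWellOrder ↥Λ' r ∧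
      ∀ η : ↥Λ', ∃ ℓ ∈ u ↑η, ∃ n : ℕ, ∀ β : ↥Λ', r β η →
        restrictAt (↑η : F kst S) ℓ n ≠ restrictAt (↑β : F kst S) ℓ n := by
  induction k with
  | zero =>
    intro Λ' hcard u hu
    have hcnt : Countable ↥Λ' := by
      rw [Nat.cast_zero, aleph_zero] at hcard
      exact Cardinal.mk_le_aleph0_iff.mp hcard
    obtain ⟨f⟩ := nonempty_embedding_nat ↥Λ'
    refine ⟨fun β η => f β < f η, ?_, ?_⟩
    · exact (RelEmbedding.mk f fun {a b} => Iff.rfl).isWellOrder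
    · intro η
      have hupos : 0 < (u ↑η).ncard := hu ↑η η.2
      obtain ⟨ℓ, hℓ⟩ := Set.nonempty_of_ncard_ne_zero hupos.ne'
      have hP : {β : ↥Λ' | f β < f η}.Finite :=
        Set.Finite.preimage f.injective.injOn (Set.finite_Iio (f η))
      refine ⟨ℓ, hℓ, hP.toFinset.sup fun β : ↥Λ' => diffBound (↑η : F kst S) (↑β) ℓ, ?_⟩
      intro β hr heq
      rw [restrictAt_eq_iff] at heq
      obtain ⟨h1, h2⟩ := heq
      have hne : (↑η : F kst S) ℓ ≠ (↑β : F kst S) ℓ := by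
        intro hEq
        have hfun : (↑η : F kst S) = ↑β :=
          funext fun l => if hl : l = ℓ then hl ▸ hEq else h2 l hl
        have : β = η := Subtype.ext hfun.symm
        subst this
        exact lt_irrefl _ hr
      obtain ⟨m, hm, hmne⟩ := diffBound_spec hne
      have hle : diffBound (↑η : F kst S) (↑β) ℓ ≤
          hP.toFinset.sup fun β : ↥Λ' => diffBound (↑η : F kst S) (↑β) ℓ :=
        Finset.le_sup (f := fun β : ↥Λ' => diffBound (↑η : F kst S) (↑β) ℓ)
          (hP.mem_toFinset.mpr hr)
      exact hmne (h1 ⟨m, lt_of_lt_of_le hm hle⟩)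
  | succ k IH =>
    intro Λ' hcard u hu
    classical
    have hsucc : aleph ((k + 1 : ℕ) : Ordinal) = Order.succ (aleph (k : ℕ)) := by
      rw [Nat.cast_add, Nat.cast_one, Ordinal.add_one_eq_succ, aleph_succ]
    set O : Ordinal.{u} := (aleph ((k + 1 : ℕ) : Ordinal)).ord with hO
    haveI hIW : IsWellOrder O.ToType (· < ·) := isWellOrder_lt
    have hmkT : #O.ToType = aleph ((k + 1 : ℕ) : Ordinal) := Cardinal.mk_ord_toType _
    obtain ⟨g⟩ : Nonempty (↥Λ' ↪ O.ToType) := by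
      rw [← Cardinal.le_def, hmkT]
      exact hcard
    have hwf : WellFounded ((· < ·) : O.ToType → O.ToType → Prop) := IsWellFounded.wf
    have hlim : Order.IsSuccLimit O := isSuccLimit_ord (aleph0_le_aleph _)
    have hne : ∀ η : ↥Λ', ∃ t, ↑η ∈ ClS Λ' g t := by
      intro η
      have h1 : typein (· < ·) (g η) < O := typein_lt_self (g η)
      have h2 : Order.succ (typein (· < ·) (g η)) < O := hlim.succ_lt h1
      refine ⟨enum (· < ·) ⟨Order.succ (typein (· < ·) (g η)), by rw [type_toType]; exact Set.mem_Iio.mpr h2⟩,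
        subset_cl _ ⟨η.2, ?_⟩⟩
      have h3 : typein ((· < ·) : O.ToType → O.ToType → Prop) (g η) <
          typein (· < ·) (enum ((· < ·) : O.ToType → O.ToType → Prop)
            ⟨Order.succ (typein (· < ·) (g η)), by rw [type_toType]; exact Set.mem_Iio.mpr h2⟩) := by
        erw [typein_enum]
        exact Order.lt_succ _
      exact (typein_lt_typein _).mp h3
    have hpred : ∀ t : O.ToType, #↥(predS Λ' g t) ≤ aleph (k : ℕ) := by
      intro t
      have hinj : #↥(predS Λ' g t) ≤ #↥{b : O.ToType | b < t} := by
        refine Cardinal.mk_le_of_injective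
          (f := fun x : ↥(predS Λ' g t) => (⟨g ⟨↑x, x.2.choose⟩, x.2.choose_spec⟩ :
            ↥{b : O.ToType | b < t})) ?_
        intro x y hxy
        have h1 : g ⟨↑x, x.2.choose⟩ = g ⟨↑y, y.2.choose⟩ := congrArg Subtype.val hxy
        have h2 := g.injective h1
        exact Subtype.ext (Subtype.mk_eq_mk.mp h2)
      have hcardIio : #↥{b : O.ToType | b < t} = (typein ((· < ·) :
          O.ToType → O.ToType → Prop) t).card := by
        rw [← type_subrel, card_type]
        rfl
      have hlt : (typein ((· < ·) : O.ToType → O.ToType → Prop) t).card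
          < aleph ((k + 1 : ℕ) : Ordinal) := Cardinal.lt_ord.mp (typein_lt_self t)
      rw [hsucc] at hlt
      exact hinj.trans (hcardIio ▸ (Order.lt_succ_iff.mp hlt))
    have hblockcard : ∀ t : O.ToType, #↥(Blk Λ' g hwf hne t) ≤ aleph (k : ℕ) := fun t =>
      (Cardinal.mk_le_mk_of_subset (blk_subset Λ' g hwf hne t)).trans
        (mk_cl_le (aleph0_le_aleph _) (hpred t))
    have H : ∀ t : O.ToType,
        ∃ r : ↥(Blk Λ' g hwf hne t) → ↥(Blk Λ' g hwf hne t) → Prop,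
          IsWellOrder ↥(Blk Λ' g hwf hne t) r ∧
          ∀ η' : ↥(Blk Λ' g hwf hne t), ∃ ℓ ∈ u ↑η' \ {badL Λ' g t ↑η'}, ∃ n : ℕ,
            ∀ β' : ↥(Blk Λ' g hwf hne t), r β' η' →
              restrictAt (↑η' : F kst S) ℓ n ≠ restrictAt (↑β' : F kst S) ℓ n := by
      intro t
      apply IH (Blk Λ' g hwf hne t) (hblockcard t) (fun x => u x \ {badL Λ' g t x})
      rintro x ⟨hxΛ, -⟩
      have h1 : (k : ℕ) + 1 < (u x).ncard := hu x hxΛ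
      have hfin : (u x).Finite := Set.toFinite _
      by_cases hb : badL Λ' g t x ∈ u x
      · rw [Set.ncard_diff_singleton_of_mem hb]; omega
      · rw [Set.diff_singleton_eq_self hb]; omega
    choose rB rBwo rBprop using H
    have hty : ∀ t : O.ToType, @Ordinal.type _ (rB t) (rBwo t) < O := by
      intro t
      refine Cardinal.lt_ord.mpr ?_
      rw [@card_type _ _ (rBwo t), hsucc]
      exact Order.lt_succ_iff.mpr (hblockcard t)
    refine combine Λ' u (typein ((· < ·) : O.ToType → O.ToType → Prop))
      (fun s t hst => (typein_lt_typein _).mpr hst)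
      (tfn Λ' g hwf hne) (Blk Λ' g hwf hne) (fun η => ⟨η.2, rfl⟩) rB rBwo O hty ?_
    intro η
    obtain ⟨ℓ, hℓ, n, hn⟩ := rBprop (tfn Λ' g hwf hne η) ⟨↑η, η.2, rfl⟩
    refine ⟨ℓ, hℓ.1, n, fun β' hb => hn β' hb, ?_⟩
    intro β hlt heq
    rw [restrictAt_eq_iff] at heq
    have hbad : Bad Λ' g (tfn Λ' g hwf hne η) ↑η ℓ :=
      ⟨↑β, ⟨tfn Λ' g hwf hne β, hlt, tfn_mem Λ' g hwf hne β⟩, fun l hl => (heq.2 l hl).symm⟩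
    exact hℓ.2 (badL_eq Λ' g hwf hne η hbad)

end Sh883

open Sh883 in
/-- Let `(S, Λ)` be a combinatorial `k*`-parameter, `k ≤ k*`, let
`Λ' ⊆ Λ` have cardinality at most `ℵ_k`, and for each `η̄ ∈ Λ'` let `u_{η̄} ⊆ {0,…,k*}`
have more than `k` elements.  Then there are an enumeration `⟨η̄^α : α < α*⟩` of `Λ'`
without repetitions and, for each `α`, an index `ℓ_α ∈ u_{η̄^α}` and `n_α ∈ ℕ` with
`η̄^α↾⟨ℓ_α,n_α⟩ ∉ {η̄^β↾⟨ℓ_α,n_α⟩ : β < α}`. -/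
theorem stmt16 {kst : ℕ} {S : Type u} (Λ : Set (Fin (kst + 1) → ℕ → S))
    (k : ℕ) (hk : k ≤ kst)
    (Λ' : Set (Fin (kst + 1) → ℕ → S)) (hsub : Λ' ⊆ Λ)
    (hcard : #Λ' ≤ Cardinal.aleph k)
    (u : (Fin (kst + 1) → ℕ → S) → Set (Fin (kst + 1)))
    (hu : ∀ η ∈ Λ', k < (u η).ncard) :
    ∃ (o : Ordinal.{u}) (e : Set.Iio o → (Fin (kst + 1) → ℕ → S))
      (L : Set.Iio o → Fin (kst + 1)) (N : Set.Iio o → ℕ),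
      Function.Injective e ∧ Set.range e = Λ' ∧
      (∀ α : Set.Iio o, L α ∈ u (e α)) ∧
      ∀ α β : Set.Iio o, (β : Ordinal) < (α : Ordinal) →
        restrictAt (e α) (L α) (N α) ≠ restrictAt (e β) (L α) (N α) := by
  obtain ⟨r, rwo, rprop⟩ := Sh883.aux k Λ' hcard u hu
  haveI := rwo
  refine ⟨Ordinal.type r, fun a => ↑(Ordinal.enum r ⟨a.1, a.2⟩), ?_⟩
  have hprop := fun a : Set.Iio (Ordinal.type r) => rprop (Ordinal.enum r ⟨a.1, a.2⟩)
  choose L hL N hN using hprop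
  refine ⟨L, N, ?_, ?_, hL, ?_⟩
  · intro a b hab
    have : Ordinal.enum r ⟨a.1, a.2⟩ = Ordinal.enum r ⟨b.1, b.2⟩ := Subtype.ext hab
    have := (Ordinal.enum r).injective this
    have : (⟨a.1, a.2⟩ : {o // o < Ordinal.type r}) = ⟨b.1, b.2⟩ := by
      exact_mod_cast this
    exact Subtype.ext (congrArg Subtype.val this)
  · ext x
    constructor
    · rintro ⟨a, rfl⟩
      exact (Ordinal.enum r ⟨a.1, a.2⟩).2
    · intro hx
      refine ⟨⟨Ordinal.typein r ⟨x, hx⟩, Ordinal.typein_lt_type r _⟩, ?_⟩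
      exact congrArg Subtype.val (Ordinal.enum_typein r ⟨x, hx⟩)
  · intro a b hba
    have hr : r (Ordinal.enum r ⟨b.1, b.2⟩) (Ordinal.enum r ⟨a.1, a.2⟩) :=
      Ordinal.enum_lt_enum.mpr (by exact hba)
    exact hN a (Ordinal.enum r ⟨b.1, b.2⟩) hr
end
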